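/- arXiv:2308.07866 — 6 statements merged into one kernel-verified Lean document; each statement's English description precedes it below -/
import Mathlib

section
/- Let G be a locally compact, second countable, Hausdorff topological group and let U ⊆ G be a nonempty open set. Then the set of all U-separated closed subsets of G is closed in 𝒞(G) with respect to the Fell topology. In particular, the limit in the Fell topology of a sequence of U-separated closed subsets is U-separated. -/
open Set Topology Filter

/-- The space of closed subsets of a topological space `X`. -/
structure ClosedSubsets (X : Type*) [TopologicalSpace X] where
  carrier : Set X
  isClosed' : IsClosed carrier

namespace ClosedSubsets

variable {X : Type*} [TopologicalSpace X]

/-- The Fell topology on the space of closed subsets. -/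
instance : TopologicalSpace (ClosedSubsets X) :=
  TopologicalSpace.generateFrom
    {U | ∃ (K : Set X) (𝓕 : Set (Set X)), IsCompact K ∧ 𝓕.Finite ∧
      (∀ F ∈ 𝓕, IsOpen F ∧ F.Nonempty) ∧
      U = {Y : ClosedSubsets X | Y.carrier ∩ K = ∅ ∧ ∀ F ∈ 𝓕, (Y.carrier ∩ F).Nonempty}}

end ClosedSubsets

variable {G : Type*} [Group G] [TopologicalSpace G] [IsTopologicalGroup G]

/-- The right action `g • C = C g⁻¹` of a topological group on its closed subsets. -/
def ClosedSubsets.smul (g : G) (C : ClosedSubsets G) : ClosedSubsets G :=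
  ⟨(fun x => x * g⁻¹) '' C.carrier, by
    simpa using (Homeomorph.mulRight g⁻¹).isClosedMap _ C.isClosed'⟩

/-- A closed set `L` is `S`-separated if `|L ∩ g·S| ≤ 1` for all `g`. -/
def SSeparated (S L : Set G) : Prop :=
  ∀ g : G, (L ∩ (fun x => x * g⁻¹) '' S).Subsingleton

/-- A closed set is uniformly separated if it is `U`-separated for some nonempty open `U`. -/
def UniformlySeparated (L : Set G) : Prop :=
  ∃ U : Set G, IsOpen U ∧ U.Nonempty ∧ SSeparated U L

/-- The hull of `L`: the closure of its orbit in the Fell topology. -/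
def hull (L : ClosedSubsets G) : Set (ClosedSubsets G) :=
  closure {C | ∃ g : G, C = ClosedSubsets.smul g L}

/-- The standard transversal of `L`. -/
def transversal (L : ClosedSubsets G) : Set (ClosedSubsets G) :=
  {L' | L' ∈ hull L ∧ (1 : G) ∈ L'.carrier}

/-- For a lcsc Hausdorff topological group `G` and a nonempty open `U ⊆ G`, the
set of `U`-separated closed subsets is closed in the Fell topology; in particular the Fell limit
of a sequence of `U`-separated closed sets is `U`-separated. -/
theorem isClosed_setOf_sSeparated (G : Type*) [Group G] [TopologicalSpace G]
    [IsTopologicalGroup G] [LocallyCompactSpace G] [SecondCountableTopology G] [T2Space G]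
    (U : Set G) (hUopen : IsOpen U) (hUne : U.Nonempty) :
    IsClosed {L : ClosedSubsets G | SSeparated U L.carrier} ∧
    (∀ (Ln : ℕ → ClosedSubsets G) (L : ClosedSubsets G),
      (∀ n, SSeparated U (Ln n).carrier) →
      Filter.Tendsto Ln Filter.atTop (nhds L) → SSeparated U L.carrier) := by
  have hclosed : IsClosed {L : ClosedSubsets G | SSeparated U L.carrier} := by
    rw [← isOpen_compl_iff]
    rw [isOpen_iff_forall_mem_open]
    intro L hL
    simp only [mem_compl_iff, mem_setOf_eq, SSeparated, not_forall] at hL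
    obtain ⟨g, hg⟩ := hL
    rw [Set.not_subsingleton_iff] at hg
    obtain ⟨x, hx, y, hy, hxy⟩ := hg
    have hW : IsOpen ((fun x => x * g⁻¹) '' U) :=
      (Homeomorph.mulRight g⁻¹).isOpenMap U hUopen
    obtain ⟨u, v, hu, hv, hxu, hyv, huv⟩ := t2_separation hxy
    set V₁ := u ∩ ((fun x => x * g⁻¹) '' U) with hV₁
    set V₂ := v ∩ ((fun x => x * g⁻¹) '' U) with hV₂
    refine ⟨{Y : ClosedSubsets G | Y.carrier ∩ (∅ : Set G) = ∅ ∧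
        ∀ F ∈ ({V₁, V₂} : Set (Set G)), (Y.carrier ∩ F).Nonempty}, ?_, ?_, ?_⟩
    · intro Y hY
      simp only [mem_setOf_eq, Set.mem_insert_iff, Set.mem_singleton_iff] at hY
      obtain ⟨-, hYF⟩ := hY
      obtain ⟨a, haY, hau, haW⟩ := hYF V₁ (Or.inl rfl)
      obtain ⟨b, hbY, hbv, hbW⟩ := hYF V₂ (Or.inr rfl)
      intro hsep
      have hab : a ≠ b := fun h => Set.disjoint_left.mp huv hau (h ▸ hbv)
      exact hab (hsep g ⟨haY, haW⟩ ⟨hbY, hbW⟩)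
    · apply TopologicalSpace.isOpen_generateFrom_of_mem
      exact ⟨∅, {V₁, V₂}, isCompact_empty, (Set.finite_singleton V₂).insert V₁,
        by rintro F (rfl | rfl)
           exacts [⟨hu.inter hW, ⟨x, hxu, hx.2⟩⟩, ⟨hv.inter hW, ⟨y, hyv, hy.2⟩⟩], rfl⟩
    · constructor
      · simp
      · rintro F (rfl | rfl)
        exacts [⟨x, hx.1, hxu, hx.2⟩, ⟨y, hy.1, hyv, hy.2⟩]
  refine ⟨hclosed, fun Ln L hn hlim => ?_⟩
  exact hclosed.mem_of_tendsto hlim (Filter.Eventually.of_forall hn)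
end

section
/- Let G be a locally compact, second countable, Hausdorff topological group, let U ⊆ G be a nonempty open set, and let L be a U-separated closed subset of G. Then every element of the hull Ω_L is U-separated. -/
open Set Topology Filter

variable {G : Type*} [Group G] [TopologicalSpace G] [IsTopologicalGroup G]

lemma smul_sep {G : Type*} [Group G] [TopologicalSpace G] [IsTopologicalGroup G]
    (U : Set G) (L : ClosedSubsets G) (hL : SSeparated U L.carrier) (h : G) :
    SSeparated U (ClosedSubsets.smul h L).carrier := by
  intro g a ha b hb
  obtain ⟨⟨la, hla, hla'⟩, ⟨u, hu, hu'⟩⟩ := ha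
  obtain ⟨⟨lb, hlb, hlb'⟩, ⟨v, hv, hv'⟩⟩ := hb
  have key := hL (h⁻¹ * g)
  have ha2 : a * h ∈ L.carrier ∩ (fun x => x * (h⁻¹ * g)⁻¹) '' U := by
    constructor
    · have : a * h = la := by rw [← hla']; group
      rw [this]; exact hla
    · exact ⟨u, hu, by rw [← hu']; group⟩
  have hb2 : b * h ∈ L.carrier ∩ (fun x => x * (h⁻¹ * g)⁻¹) '' U := by
    constructor
    · have : b * h = lb := by rw [← hlb']; group
      rw [this]; exact hlb
    · exact ⟨v, hv, by rw [← hv']; group⟩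
  have := key ha2 hb2
  exact mul_right_cancel this

/-- If `L` is a `U`-separated closed subset of a lcsc Hausdorff topological
group `G` (`U` open and nonempty), then every element of the hull `Ω_L` is `U`-separated. -/
theorem sSeparated_of_mem_hull (G : Type*) [Group G] [TopologicalSpace G]
    [IsTopologicalGroup G] [LocallyCompactSpace G] [SecondCountableTopology G] [T2Space G]
    (U : Set G) (hUopen : IsOpen U) (hUne : U.Nonempty)
    (L : ClosedSubsets G) (hL : SSeparated U L.carrier) :
    ∀ L' ∈ hull L, SSeparated U L'.carrier := by
  intro L' hL' g x hx y hy
  by_contra hxy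
  set Ug : Set G := (fun x => x * g⁻¹) '' U with hUg
  have hUgopen : IsOpen Ug := by
    rw [hUg, Set.image_mul_right, inv_inv]
    exact hUopen.preimage (continuous_mul_right g)
  obtain ⟨V₀, W₀, hV₀, hW₀, hxV, hyW, hdisj⟩ := t2_separation hxy
  set V : Set G := V₀ ∩ Ug with hV
  set W : Set G := W₀ ∩ Ug with hW
  set O : Set (ClosedSubsets G) :=
    {Y : ClosedSubsets G | Y.carrier ∩ (∅ : Set G) = ∅ ∧
      ∀ F ∈ ({V, W} : Set (Set G)), (Y.carrier ∩ F).Nonempty} with hOdef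
  have hOopen : IsOpen O := by
    apply TopologicalSpace.GenerateOpen.basic
    exact ⟨∅, {V, W}, isCompact_empty, (Set.finite_singleton W).insert V, by
      rintro F (rfl | rfl)
      · exact ⟨hV₀.inter hUgopen, ⟨x, hxV, hx.2⟩⟩
      · exact ⟨hW₀.inter hUgopen, ⟨y, hyW, hy.2⟩⟩, rfl⟩
  have hL'O : L' ∈ O := by
    refine ⟨Set.inter_empty _, ?_⟩
    rintro F (rfl | rfl)
    · exact ⟨x, hx.1, hxV, hx.2⟩
    · exact ⟨y, hy.1, hyW, hy.2⟩
  obtain ⟨C, hCO, h', hC⟩ := mem_closure_iff.mp hL' O hOopen hL'O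
  subst hC
  obtain ⟨a, haC, haV⟩ := hCO.2 V (by left; rfl)
  obtain ⟨b, hbC, hbW⟩ := hCO.2 W (by right; rfl)
  have hab : a = b := smul_sep U L hL h' g ⟨haC, haV.2⟩ ⟨hbC, hbW.2⟩
  subst hab
  exact (Set.disjoint_iff.mp hdisj ⟨haV.1, hbW.1⟩)
end

section
/- Let G be a locally compact, second countable, Hausdorff topological group and let L₀ ∈ 𝒞(G). Let 𝒢_{L₀} := {(g, L) ∈ G × 𝒞(G) : L ∈ Ξ_{L₀} and g ∈ L}, equipped with the subspace topology from G × 𝒞(G) where 𝒞(G) carries the Fell topology. Then the range map r : 𝒢_{L₀} → Ξ_{L₀}, r(g, L) := g·L, is a local homeomorphism if and only if L₀ is uniformly separated. -/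
open Set Topology Filter

variable {G : Type*} [Group G] [TopologicalSpace G] [IsTopologicalGroup G]

namespace ClosedSubsets

variable {X : Type*} [TopologicalSpace X]

theorem ext' {C D : ClosedSubsets X} (h : C.carrier = D.carrier) : C = D := by
  cases C; cases D; simpa using h

theorem isOpen_fell {K : Set X} {𝓕 : Set (Set X)} (hK : IsCompact K) (h𝓕 : 𝓕.Finite)
    (hF : ∀ F ∈ 𝓕, IsOpen F ∧ F.Nonempty) :
    IsOpen {Y : ClosedSubsets X | Y.carrier ∩ K = ∅ ∧ ∀ F ∈ 𝓕, (Y.carrier ∩ F).Nonempty} :=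
  TopologicalSpace.isOpen_generateFrom_of_mem ⟨K, 𝓕, hK, h𝓕, hF, rfl⟩

theorem isOpen_hit {F : Set X} (hFo : IsOpen F) (hFne : F.Nonempty) :
    IsOpen {Y : ClosedSubsets X | (Y.carrier ∩ F).Nonempty} := by
  have h := isOpen_fell (K := (∅ : Set X)) (𝓕 := {F}) isCompact_empty (finite_singleton F)
    (by rintro F' hF'; rw [mem_singleton_iff] at hF'; subst hF'; exact ⟨hFo, hFne⟩)
  convert h using 1
  ext Y
  simp

theorem isOpen_miss {K : Set X} (hK : IsCompact K) :
    IsOpen {Y : ClosedSubsets X | Y.carrier ∩ K = ∅} := by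
  have h := isOpen_fell (K := K) (𝓕 := (∅ : Set (Set X))) hK finite_empty (by simp)
  convert h using 1
  ext Y
  simp

theorem isClosed_mem_carrier (x : X) : IsClosed {Y : ClosedSubsets X | x ∈ Y.carrier} := by
  rw [← isOpen_compl_iff]
  convert isOpen_miss (K := ({x} : Set X)) isCompact_singleton using 1
  ext Y
  simp [Set.inter_singleton_eq_empty]

theorem le_nhds_fell {𝒰 : Filter (ClosedSubsets X)} {C : ClosedSubsets X}
    (h : ∀ (K : Set X) (𝓕 : Set (Set X)), IsCompact K → 𝓕.Finite →
      (∀ F ∈ 𝓕, IsOpen F ∧ F.Nonempty) →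
      C.carrier ∩ K = ∅ → (∀ F ∈ 𝓕, (C.carrier ∩ F).Nonempty) →
      {Y : ClosedSubsets X | Y.carrier ∩ K = ∅ ∧ ∀ F ∈ 𝓕, (Y.carrier ∩ F).Nonempty} ∈ 𝒰) :
    𝒰 ≤ 𝓝 C := by
  refine le_trans ?_ (le_of_eq (TopologicalSpace.nhds_generateFrom (a := C)).symm)
  refine le_iInf₂ fun s hs => ?_
  obtain ⟨hCs, K, 𝓕, hK, h𝓕, hF, rfl⟩ := hs
  exact le_principal_iff.mpr (h K 𝓕 hK h𝓕 hF hCs.1 hCs.2)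

theorem compactSpace : CompactSpace (ClosedSubsets X) := by
  classical
  refine ⟨?_⟩
  rw [isCompact_iff_ultrafilter_le_nhds]
  intro 𝒰 _
  set Cs : Set X := {x | ∀ F : Set X, IsOpen F → x ∈ F →
      {Y : ClosedSubsets X | (Y.carrier ∩ F).Nonempty} ∈ 𝒰} with hCs
  have hclosed : IsClosed Cs := by
    rw [← isOpen_compl_iff, isOpen_iff_forall_mem_open]
    intro x hx
    simp only [hCs, mem_compl_iff, mem_setOf_eq, not_forall] at hx
    obtain ⟨F, hFo, hxF, hFnot⟩ := hx
    refine ⟨F, fun y hy hyC => hFnot (hyC F hFo hy), hFo, hxF⟩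
  refine ⟨⟨Cs, hclosed⟩, mem_univ _, ?_⟩
  refine le_nhds_fell fun K 𝓕 hK h𝓕 hF hmiss hhit => ?_
  have hmem_hit : ∀ F ∈ 𝓕, {Y : ClosedSubsets X | (Y.carrier ∩ F).Nonempty} ∈ 𝒰 := by
    intro F hFm
    obtain ⟨x, hxC, hxF⟩ := hhit F hFm
    exact hxC F (hF F hFm).1 hxF
  have hmem_miss : {Y : ClosedSubsets X | Y.carrier ∩ K = ∅} ∈ 𝒰 := by
    set Fk : X → Set X := fun k =>
      if h : ∃ F : Set X, IsOpen F ∧ k ∈ F ∧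
          {Y : ClosedSubsets X | (Y.carrier ∩ F).Nonempty} ∉ 𝒰 then h.choose else univ
      with hFk
    have hFkspec : ∀ k ∈ K, IsOpen (Fk k) ∧ k ∈ Fk k ∧
        {Y : ClosedSubsets X | (Y.carrier ∩ Fk k).Nonempty} ∉ 𝒰 := by
      intro k hk
      have hknot : k ∉ Cs := by
        intro hmem
        have : k ∈ (⟨Cs, hclosed⟩ : ClosedSubsets X).carrier ∩ K := ⟨hmem, hk⟩
        rw [hmiss] at this
        exact this
      simp only [hCs, mem_setOf_eq, not_forall] at hknot
      obtain ⟨F, hFo, hkF, hFnot⟩ := hknot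
      have hex : ∃ F : Set X, IsOpen F ∧ k ∈ F ∧
          {Y : ClosedSubsets X | (Y.carrier ∩ F).Nonempty} ∉ 𝒰 := ⟨F, hFo, hkF, hFnot⟩
      rw [hFk]
      simp only [dif_pos hex]
      exact hex.choose_spec
    have hnhds : ∀ k ∈ K, Fk k ∈ 𝓝 k := fun k hk =>
      ((hFkspec k hk).1).mem_nhds (hFkspec k hk).2.1
    obtain ⟨t, htK, hcover⟩ := hK.elim_nhds_subcover Fk hnhds
    have hbig : (⋂ k ∈ (t : Set X), {Y : ClosedSubsets X | Y.carrier ∩ Fk k = ∅}) ∈ 𝒰 := by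
      refine (Filter.biInter_mem t.finite_toSet).2 ?_
      intro k hk
      have := (hFkspec k (htK k hk)).2.2
      rw [← Ultrafilter.compl_mem_iff_notMem] at this
      convert this using 1
      rw [Ultrafilter.mem_coe]; apply iff_of_eq; congr 1
      ext Y
      simp [Set.not_nonempty_iff_eq_empty]
    refine Filter.mem_of_superset hbig ?_
    intro Y hY
    rw [mem_setOf_eq, Set.eq_empty_iff_forall_notMem]
    rintro x ⟨hxY, hxK⟩
    obtain ⟨k, hkt, hxk⟩ := by
      have := hcover hxK
      simpa using this
    have hYk : Y.carrier ∩ Fk k = ∅ := by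
      have := mem_iInter₂.1 hY k hkt
      exact this
    rw [Set.eq_empty_iff_forall_notMem] at hYk
    exact hYk x ⟨hxY, hxk⟩
  have : {Y : ClosedSubsets X | Y.carrier ∩ K = ∅} ∩
      (⋂ F ∈ 𝓕, {Y : ClosedSubsets X | (Y.carrier ∩ F).Nonempty}) ∈ 𝒰 :=
    Filter.inter_mem hmem_miss ((Filter.biInter_mem h𝓕).2 hmem_hit)
  refine Filter.mem_of_superset this ?_
  rintro Y ⟨h1, h2⟩
  exact ⟨h1, fun F hFm => mem_iInter₂.1 h2 F hFm⟩

end ClosedSubsets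

namespace ClosedSubsets

theorem mem_smul_iff {g x : G} {C : ClosedSubsets G} :
    x ∈ (ClosedSubsets.smul g C).carrier ↔ x * g ∈ C.carrier := by
  constructor
  · rintro ⟨c, hc, rfl⟩
    simpa using hc
  · intro h
    exact ⟨x * g, h, by simp⟩

theorem smul_smul (a b : G) (C : ClosedSubsets G) :
    ClosedSubsets.smul a (ClosedSubsets.smul b C) = ClosedSubsets.smul (a * b) C := by
  apply ext'
  ext x
  simp only [mem_smul_iff]
  rw [mul_assoc]

theorem smul_one' (C : ClosedSubsets G) : ClosedSubsets.smul (1 : G) C = C := by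
  apply ext'
  ext x
  simp [mem_smul_iff]

theorem smul_inv_smul' (a : G) (C : ClosedSubsets G) :
    ClosedSubsets.smul a⁻¹ (ClosedSubsets.smul a C) = C := by
  rw [smul_smul, inv_mul_cancel, smul_one']

theorem isOpen_translate {U : Set G} (hU : IsOpen U) (c : G) :
    IsOpen ((fun x => x * c) '' U) := by
  simpa using (Homeomorph.mulRight c).isOpenMap U hU

theorem continuous_fell_smul [LocallyCompactSpace G] [T2Space G] :
    Continuous (fun p : G × ClosedSubsets G => ClosedSubsets.smul p.1 p.2) := by
  classical
  rw [continuous_generateFrom_iff]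
  rintro s ⟨K, 𝓕, hK, h𝓕, hF, rfl⟩
  rw [isOpen_iff_mem_nhds]
  rintro ⟨g₀, C₀⟩ ⟨hmiss, hhit⟩
  -- the "miss" part
  have hKg₀ : IsCompact ((fun k => k * g₀) '' K) := hK.image (continuous_mul_right g₀)
  have hdisj : (fun k => k * g₀) '' K ⊆ (C₀.carrier)ᶜ := by
    rintro c ⟨k, hk, rfl⟩ hc
    have h1 : (k * g₀) * g₀⁻¹ ∈ (ClosedSubsets.smul g₀ C₀).carrier :=
      mem_smul_iff.2 (by simpa using hc)
    have h2 : (k * g₀) * g₀⁻¹ = k := by group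
    rw [h2] at h1
    have : k ∈ (ClosedSubsets.smul g₀ C₀).carrier ∩ K := ⟨h1, hk⟩
    rw [hmiss] at this
    exact this
  obtain ⟨Lc, hLc, hsub1, hsub2⟩ :=
    exists_compact_between hKg₀ (isOpen_compl_iff.2 C₀.isClosed') hdisj
  have htube : K ×ˢ ({g₀} : Set G) ⊆ (fun q : G × G => q.1 * q.2) ⁻¹' interior Lc := by
    rintro ⟨k, g⟩ ⟨hk, hg⟩
    rw [mem_singleton_iff] at hg
    subst hg
    exact hsub1 ⟨k, hk, rfl⟩
  obtain ⟨u, v, huo, hvo, hKu, hgv, huv⟩ :=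
    generalized_tube_lemma hK isCompact_singleton
      (isOpen_interior.preimage continuous_mul) htube
  have hg₀v : g₀ ∈ v := hgv rfl
  have hC₀miss : C₀ ∈ {Y : ClosedSubsets G | Y.carrier ∩ Lc = ∅} := by
    rw [mem_setOf_eq, Set.eq_empty_iff_forall_notMem]
    rintro x ⟨hx1, hx2⟩
    exact hsub2 hx2 hx1
  -- the "hit" parts
  have hFchoice : ∀ F ∈ 𝓕, ∃ B A : Set G, IsOpen B ∧ g₀ ∈ B ∧ IsOpen A ∧
      (C₀.carrier ∩ A).Nonempty ∧
      ∀ g ∈ B, ∀ C : ClosedSubsets G, (C.carrier ∩ A).Nonempty →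
        ((ClosedSubsets.smul g C).carrier ∩ F).Nonempty := by
    intro F hFm
    obtain ⟨y₀, hy₀s, hy₀F⟩ := hhit F hFm
    have hy₀C : y₀ * g₀ ∈ C₀.carrier := mem_smul_iff.1 hy₀s
    have hopen : IsOpen ((fun q : G × G => q.1 * q.2⁻¹) ⁻¹' F) :=
      (hF F hFm).1.preimage (continuous_fst.mul continuous_snd.inv)
    have hmem : (y₀ * g₀, g₀) ∈ (fun q : G × G => q.1 * q.2⁻¹) ⁻¹' F := by
      have : (y₀ * g₀) * g₀⁻¹ = y₀ := by group
      simpa [this] using hy₀F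
    obtain ⟨A, B, hAo, hBo, hyA, hgB, hAB⟩ := isOpen_prod_iff.1 hopen _ _ hmem
    refine ⟨B, A, hBo, hgB, hAo, ⟨y₀ * g₀, hy₀C, hyA⟩, ?_⟩
    rintro g hgb C ⟨c, hcC, hcA⟩
    refine ⟨c * g⁻¹, mem_smul_iff.2 (by simpa using hcC), ?_⟩
    have hcg : (c, g) ∈ A ×ˢ B := ⟨hcA, hgb⟩
    exact hAB hcg
  choose! B A hBo hgB hAo hCA himp using hFchoice
  -- assemble the neighborhood
  have hN1o : IsOpen (v ∩ ⋂ F ∈ 𝓕, B F) :=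
    hvo.inter (h𝓕.isOpen_biInter fun F hFm => hBo F hFm)
  have hN1mem : g₀ ∈ v ∩ ⋂ F ∈ 𝓕, B F :=
    ⟨hg₀v, mem_iInter₂.2 fun F hFm => hgB F hFm⟩
  have hN2o : IsOpen ({Y : ClosedSubsets G | Y.carrier ∩ Lc = ∅} ∩
      ⋂ F ∈ 𝓕, {Y : ClosedSubsets G | (Y.carrier ∩ A F).Nonempty}) := by
    refine (isOpen_miss hLc).inter (h𝓕.isOpen_biInter fun F hFm => ?_)
    exact isOpen_hit (hAo F hFm) ((hCA F hFm).mono inter_subset_right)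
  have hN2mem : C₀ ∈ {Y : ClosedSubsets G | Y.carrier ∩ Lc = ∅} ∩
      ⋂ F ∈ 𝓕, {Y : ClosedSubsets G | (Y.carrier ∩ A F).Nonempty} :=
    ⟨hC₀miss, mem_iInter₂.2 fun F hFm => hCA F hFm⟩
  refine Filter.mem_of_superset
    (prod_mem_nhds (hN1o.mem_nhds hN1mem) (hN2o.mem_nhds hN2mem)) ?_
  rintro ⟨g, C⟩ ⟨⟨hgvm, hgBm⟩, ⟨hCmiss, hChit⟩⟩
  constructor
  · rw [Set.eq_empty_iff_forall_notMem]
    rintro x ⟨hx1, hx2⟩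
    have hxu : x ∈ u := hKu hx2
    have hxg' : (x, g) ∈ u ×ˢ v := ⟨hxu, hgvm⟩
    have : x * g ∈ interior Lc := huv hxg'
    have hxg : x * g ∈ C.carrier := mem_smul_iff.1 hx1
    have : x * g ∈ C.carrier ∩ Lc := ⟨hxg, interior_subset this⟩
    rw [hCmiss] at this
    exact this
  · intro F hFm
    exact himp F hFm g (mem_iInter₂.1 hgBm F hFm) C (mem_iInter₂.1 hChit F hFm)

end ClosedSubsets

namespace ClosedSubsets

theorem sSeparated_smul {U L : Set G} (h : SSeparated U L) (a : G) :
    SSeparated U ((fun x => x * a⁻¹) '' L) := by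
  intro g
  rintro p ⟨⟨l₁, hl₁, rfl⟩, u₁, hu₁, hpu₁⟩ q ⟨⟨l₂, hl₂, rfl⟩, u₂, hu₂, hpu₂⟩
  simp only at hpu₁ hpu₂
  have e1 : l₁ = u₁ * (a⁻¹ * g)⁻¹ := by
    have : l₁ = u₁ * g⁻¹ * a := by rw [hpu₁]; group
    rw [this]; group
  have e2 : l₂ = u₂ * (a⁻¹ * g)⁻¹ := by
    have : l₂ = u₂ * g⁻¹ * a := by rw [hpu₂]; group
    rw [this]; group
  have key : l₁ = l₂ :=
    h (a⁻¹ * g) ⟨hl₁, ⟨u₁, hu₁, e1.symm⟩⟩ ⟨hl₂, ⟨u₂, hu₂, e2.symm⟩⟩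
  rw [key]

theorem isClosed_sSeparated [T2Space G] {U : Set G} (hU : IsOpen U) :
    IsClosed {C : ClosedSubsets G | SSeparated U C.carrier} := by
  rw [← isOpen_compl_iff, isOpen_iff_forall_mem_open]
  intro C hC
  rw [mem_compl_iff, mem_setOf_eq, SSeparated, not_forall] at hC
  obtain ⟨g, hg⟩ := hC
  rw [Set.not_subsingleton_iff] at hg
  obtain ⟨x, hx, y, hy, hxy⟩ := hg
  obtain ⟨hxC, hxU⟩ := hx
  obtain ⟨hyC, hyU⟩ := hy
  obtain ⟨O₁, O₂, hO₁, hO₂, hxO₁, hyO₂, hdisj⟩ := t2_separation hxy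
  have hUg : IsOpen ((fun x => x * g⁻¹) '' U) := isOpen_translate hU g⁻¹
  set F₁ := O₁ ∩ (fun x => x * g⁻¹) '' U with hF₁
  set F₂ := O₂ ∩ (fun x => x * g⁻¹) '' U with hF₂
  refine ⟨{Y : ClosedSubsets G | (Y.carrier ∩ F₁).Nonempty} ∩
      {Y : ClosedSubsets G | (Y.carrier ∩ F₂).Nonempty}, ?_, ?_, ?_⟩
  · rintro Y ⟨⟨x', hx'Y, hx'F⟩, ⟨y', hy'Y, hy'F⟩⟩
    rw [mem_compl_iff, mem_setOf_eq, SSeparated, not_forall]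
    refine ⟨g, ?_⟩
    rw [Set.not_subsingleton_iff]
    refine ⟨x', ⟨hx'Y, hx'F.2⟩, y', ⟨hy'Y, hy'F.2⟩, ?_⟩
    intro hxy'
    exact (Set.disjoint_left.1 hdisj hx'F.1) (hxy' ▸ hy'F.1)
  · exact (isOpen_hit (hO₁.inter hUg) ⟨x, hxO₁, hxU⟩).inter
      (isOpen_hit (hO₂.inter hUg) ⟨y, hyO₂, hyU⟩)
  · exact ⟨⟨x, hxC, hxO₁, hxU⟩, ⟨y, hyC, hyO₂, hyU⟩⟩

theorem transversal_sSeparated [T2Space G] {L₀ : ClosedSubsets G} {U : Set G} (hU : IsOpen U)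
    (hsep : SSeparated U L₀.carrier) :
    ∀ M ∈ transversal L₀, SSeparated U M.carrier := by
  intro M hM
  have horbit : {C : ClosedSubsets G | ∃ g : G, C = ClosedSubsets.smul g L₀} ⊆
      {C : ClosedSubsets G | SSeparated U C.carrier} := by
    rintro C ⟨g, rfl⟩
    exact sSeparated_smul hsep g
  have : hull L₀ ⊆ {C : ClosedSubsets G | SSeparated U C.carrier} :=
    closure_minimal horbit (isClosed_sSeparated hU)
  exact this hM.1

theorem isClosed_transversal [T2Space G] (L₀ : ClosedSubsets G) :
    IsClosed (transversal L₀) := by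
  have : transversal L₀ = hull L₀ ∩ {Y : ClosedSubsets G | (1 : G) ∈ Y.carrier} := rfl
  rw [this]
  exact isClosed_closure.inter (isClosed_mem_carrier 1)

end ClosedSubsets

open scoped Pointwise

/-- For a lcsc Hausdorff topological group `G` and `L₀ ∈ 𝒞(G)`, the range map
`r(g, L) = g·L` of the groupoid `𝒢_{L₀} = {(g, L) : L ∈ Ξ_{L₀}, g ∈ L}` (with the topology
induced from `G × 𝒞(G)`, Fell topology on the second factor) is a local homeomorphism onto the
standard transversal `Ξ_{L₀}` if and only if `L₀` is uniformly separated.  (The hypothesis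
`hmem`, that the range map indeed takes values in `Ξ_{L₀}`, is a true statement, universally
quantified here so that the map into the subtype can be written down.) -/
theorem rangeMap_isLocalHomeomorph_iff_uniformlySeparated (G : Type*) [Group G]
    [TopologicalSpace G] [IsTopologicalGroup G] [LocallyCompactSpace G]
    [SecondCountableTopology G] [T2Space G] (L₀ : ClosedSubsets G)
    (hmem : ∀ p : {p : G × ClosedSubsets G // p.2 ∈ transversal L₀ ∧ p.1 ∈ p.2.carrier},
      ClosedSubsets.smul p.1.1 p.1.2 ∈ transversal L₀) :
    IsLocalHomeomorph
      (fun p : {p : G × ClosedSubsets G // p.2 ∈ transversal L₀ ∧ p.1 ∈ p.2.carrier} =>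
        (⟨ClosedSubsets.smul p.1.1 p.1.2, hmem p⟩ : transversal L₀)) ↔
    UniformlySeparated L₀.carrier := by
  classical
  set f : {p : G × ClosedSubsets G // p.2 ∈ transversal L₀ ∧ p.1 ∈ p.2.carrier} →
      ↥(transversal L₀) :=
    fun p => (⟨ClosedSubsets.smul p.1.1 p.1.2, hmem p⟩ : transversal L₀) with hfdef
  constructor
  · -- local homeomorphism implies uniformly separated
    intro hloc
    by_contra hns
    rw [UniformlySeparated] at hns
    push_neg at hns
    obtain ⟨u, hu⟩ := (𝓝 (1 : G)).exists_antitone_basis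
    have key : ∀ n : ℕ, ∃ x y : G, x ∈ L₀.carrier ∧ y ∈ L₀.carrier ∧ x ≠ y ∧
        y * x⁻¹ ∈ u n * (u n)⁻¹ := by
      intro n
      have h1 : (1 : G) ∈ interior (u n) :=
        mem_interior_iff_mem_nhds.2 (hu.1.mem_of_mem trivial)
      have h2 := hns (interior (u n)) isOpen_interior ⟨1, h1⟩
      unfold SSeparated at h2
      push_neg at h2
      obtain ⟨g, hg⟩ := h2
      obtain ⟨x, ⟨hxL, a, ha, hax⟩, y, ⟨hyL, b, hb, hby⟩, hxy⟩ := hg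
      refine ⟨x, y, hxL, hyL, hxy, ?_⟩
      have hyx : y * x⁻¹ = b * a⁻¹ := by
        simp only at hax hby
        rw [← hax, ← hby]; group
      rw [hyx]
      exact Set.mul_mem_mul (interior_subset hb) (Set.inv_mem_inv.2 (interior_subset ha))
    choose x y hxL hyL hxy hz using key
    set z : ℕ → G := fun n => y n * (x n)⁻¹ with hzdef
    have hzne : ∀ n, z n ≠ 1 := fun n h => hxy n (mul_inv_eq_one.1 h).symm
    have hztends : Tendsto z atTop (𝓝 (1 : G)) := by
      rw [Filter.tendsto_def]
      intro s hs
      obtain ⟨V, hV, hVs⟩ := exists_nhds_split_inv hs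
      obtain ⟨n₀, -, hn₀⟩ := hu.1.mem_iff.1 hV
      rw [Filter.mem_atTop_sets]
      refine ⟨n₀, fun n hn => ?_⟩
      have hsub : u n ⊆ V := (hu.antitone hn).trans hn₀
      obtain ⟨v, hv, ww, hww, hvw⟩ := Set.mem_mul.1 (hz n)
      have hmem' : v / ww⁻¹ ∈ s := hVs v (hsub hv) ww⁻¹ (hsub (Set.mem_inv.1 hww))
      have e : v / ww⁻¹ = z n := by
        have hzn : z n = y n * (x n)⁻¹ := rfl
        rw [hzn, ← hvw, div_eq_mul_inv, inv_inv]
      rw [mem_preimage, ← e]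
      exact hmem'
    set C : ℕ → ClosedSubsets G := fun n => ClosedSubsets.smul (x n) L₀ with hCdef
    have hCmem : ∀ n, C n ∈ transversal L₀ := by
      intro n
      refine ⟨subset_closure ⟨x n, rfl⟩, ?_⟩
      exact ClosedSubsets.mem_smul_iff.2 (by simpa using hxL n)
    have hzC : ∀ n, z n ∈ (C n).carrier := by
      intro n
      refine ClosedSubsets.mem_smul_iff.2 ?_
      have h' : z n * x n = y n := by rw [hzdef]; group
      rw [h']
      exact hyL n
    haveI : CompactSpace (ClosedSubsets G) := ClosedSubsets.compactSpace
    have hΞc : IsCompact (transversal L₀) := (ClosedSubsets.isClosed_transversal L₀).isCompact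
    have hmap : Filter.map C atTop ≤ 𝓟 (transversal L₀) :=
      le_principal_iff.2 (Filter.mem_map.2 (Filter.Eventually.of_forall hCmem))
    obtain ⟨Cl, hClmem, hCl⟩ := hΞc.exists_clusterPt hmap
    set ℓ : Filter ℕ := atTop ⊓ Filter.comap C (𝓝 Cl) with hℓdef
    haveI hℓne : ℓ.NeBot := by
      have h1 : NeBot (Filter.map C atTop ⊓ 𝓝 Cl) := by
        rw [inf_comm]; exact hCl
      rw [← Filter.push_pull] at h1
      rw [hℓdef]
      exact (Filter.map_neBot_iff C).1 h1
    have hTC : Tendsto C ℓ (𝓝 Cl) := by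
      rw [hℓdef]
      exact Filter.tendsto_comap.mono_left inf_le_right
    have hTz : Tendsto z ℓ (𝓝 (1 : G)) := hztends.mono_left (by rw [hℓdef]; exact inf_le_left)
    set pinf : {p : G × ClosedSubsets G // p.2 ∈ transversal L₀ ∧ p.1 ∈ p.2.carrier} :=
      ⟨((1 : G), Cl), hClmem, hClmem.2⟩ with hpinfdef
    obtain ⟨e, hpe, hfe⟩ := hloc pinf
    obtain ⟨O, hOo, hOeq⟩ := isOpen_induced_iff.1 e.open_source
    have hpinfO : ((1 : G), Cl) ∈ O := by
      rw [← hOeq] at hpe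
      exact hpe
    have hTA : Tendsto (fun n => (((1 : G), C n) : G × ClosedSubsets G)) ℓ
        (𝓝 (((1 : G), Cl) : G × ClosedSubsets G)) :=
      tendsto_const_nhds.prodMk_nhds hTC
    have hTzinv : Tendsto (fun n => (z n)⁻¹) ℓ (𝓝 (1 : G)) := by
      have h' := hTz.inv
      simpa using h'
    have hTsmul : Tendsto (fun n => ClosedSubsets.smul (z n) (C n)) ℓ (𝓝 Cl) := by
      have h1 : Tendsto (fun n => ((z n, C n) : G × ClosedSubsets G)) ℓ
          (𝓝 (((1 : G), Cl) : G × ClosedSubsets G)) := hTz.prodMk_nhds hTC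
      have h2 := (ClosedSubsets.continuous_fell_smul.tendsto (((1 : G), Cl) :
        G × ClosedSubsets G)).comp h1
      simpa [ClosedSubsets.smul_one', Function.comp_def] using h2
    have hTB : Tendsto (fun n => ((((z n)⁻¹, ClosedSubsets.smul (z n) (C n))) :
        G × ClosedSubsets G)) ℓ (𝓝 (((1 : G), Cl) : G × ClosedSubsets G)) :=
      hTzinv.prodMk_nhds hTsmul
    have hev : ∀ᶠ n in ℓ, (((1 : G), C n) : G × ClosedSubsets G) ∈ O ∧
        ((((z n)⁻¹, ClosedSubsets.smul (z n) (C n))) : G × ClosedSubsets G) ∈ O :=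
      (hTA.eventually (hOo.mem_nhds hpinfO)).and (hTB.eventually (hOo.mem_nhds hpinfO))
    obtain ⟨n, hnA, hnB⟩ := hev.exists
    set pA : {p : G × ClosedSubsets G // p.2 ∈ transversal L₀ ∧ p.1 ∈ p.2.carrier} :=
      ⟨((1 : G), C n), hCmem n, (hCmem n).2⟩ with hpAdef
    have hBmem : ClosedSubsets.smul (z n) (C n) ∈ transversal L₀ :=
      hmem ⟨(z n, C n), hCmem n, hzC n⟩
    have hBpt : (z n)⁻¹ ∈ (ClosedSubsets.smul (z n) (C n)).carrier :=
      ClosedSubsets.mem_smul_iff.2 (by simpa using (hCmem n).2)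
    set pB : {p : G × ClosedSubsets G // p.2 ∈ transversal L₀ ∧ p.1 ∈ p.2.carrier} :=
      ⟨((z n)⁻¹, ClosedSubsets.smul (z n) (C n)), hBmem, hBpt⟩ with hpBdef
    have hA : pA ∈ e.source := by rw [← hOeq]; exact hnA
    have hB : pB ∈ e.source := by rw [← hOeq]; exact hnB
    have hfeq : f pA = f pB := by
      apply Subtype.ext
      show ClosedSubsets.smul (1 : G) (C n) =
        ClosedSubsets.smul (z n)⁻¹ (ClosedSubsets.smul (z n) (C n))
      rw [ClosedSubsets.smul_one', ClosedSubsets.smul_inv_smul']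
    have hinj : Set.InjOn f e.source := hfe ▸ e.injOn
    have hAB : pA = pB := hinj hA hB hfeq
    have h1z : (1 : G) = (z n)⁻¹ := congrArg (fun q :
      {p : G × ClosedSubsets G // p.2 ∈ transversal L₀ ∧ p.1 ∈ p.2.carrier} => q.val.1) hAB
    exact hzne n (inv_eq_one.1 h1z.symm)
  · -- uniformly separated implies local homeomorphism
    rintro ⟨U, hUo, ⟨u₀, hu₀⟩, hsep⟩
    have hsepAll : ∀ M ∈ transversal L₀, SSeparated U M.carrier :=
      ClosedSubsets.transversal_sSeparated hUo hsep
    apply IsLocalHomeomorph.mk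
    intro p
    set g : G := p.val.1 with hgdef
    set P : Set G := (fun x => x * (g * u₀)⁻¹) '' U with hPdef
    have hPo : IsOpen P := by rw [hPdef]; exact ClosedSubsets.isOpen_translate hUo _
    have hginv : g⁻¹ ∈ P := ⟨u₀, hu₀, by group⟩
    have hPne : P.Nonempty := ⟨g⁻¹, hginv⟩
    have hPsub : ∀ M : ClosedSubsets G, M ∈ transversal L₀ →
        (M.carrier ∩ P).Subsingleton := by
      intro M hM
      rw [hPdef]
      exact hsepAll M hM (g * u₀)
    set w : ↥(transversal L₀) → G := fun M =>
      if h : (M.val.carrier ∩ P).Nonempty then h.choose else 1 with hwdef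
    have hwmem : ∀ M : ↥(transversal L₀), (M.val.carrier ∩ P).Nonempty →
        w M ∈ M.val.carrier ∩ P := by
      intro M h
      rw [hwdef]
      simp only [dif_pos h]
      exact h.choose_spec
    have hwuniq : ∀ (M : ↥(transversal L₀)) (_ : (M.val.carrier ∩ P).Nonempty)
        (x : G), x ∈ M.val.carrier ∩ P → x = w M := by
      intro M h x hx
      exact hPsub M.val M.prop hx (hwmem M h)
    have hinvm : ∀ M : ↥(transversal L₀), (M.val.carrier ∩ P).Nonempty →
        ClosedSubsets.smul (w M) M.val ∈ transversal L₀ ∧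
          (w M)⁻¹ ∈ (ClosedSubsets.smul (w M) M.val).carrier := by
      intro M h
      refine ⟨hmem ⟨(w M, M.val), M.prop, (hwmem M h).1⟩, ?_⟩
      exact ClosedSubsets.mem_smul_iff.2 (by simpa using M.prop.2)
    set invF : ↥(transversal L₀) →
        {p : G × ClosedSubsets G // p.2 ∈ transversal L₀ ∧ p.1 ∈ p.2.carrier} :=
      fun M => if h : (M.val.carrier ∩ P).Nonempty then
        ⟨((w M)⁻¹, ClosedSubsets.smul (w M) M.val), (hinvm M h).1, (hinvm M h).2⟩
      else p with hinvFdef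
    have hinvF_eq : ∀ (M : ↥(transversal L₀)) (h : (M.val.carrier ∩ P).Nonempty),
        invF M = ⟨((w M)⁻¹, ClosedSubsets.smul (w M) M.val), (hinvm M h).1, (hinvm M h).2⟩ :=
      fun M h => dif_pos h
    set S : Set {p : G × ClosedSubsets G // p.2 ∈ transversal L₀ ∧ p.1 ∈ p.2.carrier} :=
      {q | (q.val.1)⁻¹ ∈ P} with hSdef
    set T : Set ↥(transversal L₀) := {M | (M.val.carrier ∩ P).Nonempty} with hTdef
    have hwcont : ContinuousOn w T := by
      intro M hM
      rw [ContinuousWithinAt, Filter.tendsto_def]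
      intro s hs
      obtain ⟨N, hNs, hNo, hwN⟩ := mem_nhds_iff.1 hs
      have hwPN : w M ∈ P ∩ N := ⟨(hwmem M hM).2, hwN⟩
      have hQo : IsOpen {Y : ClosedSubsets G | (Y.carrier ∩ (P ∩ N)).Nonempty} :=
        ClosedSubsets.isOpen_hit (hPo.inter hNo) ⟨w M, hwPN⟩
      refine mem_nhdsWithin.2 ⟨Subtype.val ⁻¹'
        {Y : ClosedSubsets G | (Y.carrier ∩ (P ∩ N)).Nonempty},
        hQo.preimage continuous_subtype_val, ?_, ?_⟩
      · exact ⟨w M, (hwmem M hM).1, hwPN⟩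
      · rintro M' ⟨hM'Q, hM'T⟩
        obtain ⟨yy, hyM', hyP, hyN⟩ := hM'Q
        have hyw : yy = w M' := hwuniq M' hM'T yy ⟨hyM', hyP⟩
        exact hNs (hyw ▸ hyN)
    refine ⟨⟨⟨⟨f, invF, S, T, ?_, ?_, ?_, ?_⟩, ?_, ?_⟩, ?_, ?_⟩, ?_, ?_⟩
    · -- map_source'
      intro q hq
      exact ⟨(q.val.1)⁻¹, ClosedSubsets.mem_smul_iff.2 (by simpa using q.prop.1.2), hq⟩
    · -- map_target'
      intro M hM
      have hM' : (M.val.carrier ∩ P).Nonempty := hM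
      rw [hinvF_eq M hM']
      show (((w M)⁻¹)⁻¹ : G) ∈ P
      rw [inv_inv]
      exact (hwmem M hM').2
    · -- left_inv'
      intro q hq
      have hmemq : (q.val.1)⁻¹ ∈ (f q).val.carrier ∩ P :=
        ⟨ClosedSubsets.mem_smul_iff.2 (by simpa using q.prop.1.2), hq⟩
      have hne : ((f q).val.carrier ∩ P).Nonempty := ⟨_, hmemq⟩
      have hwq : (q.val.1)⁻¹ = w (f q) := hwuniq (f q) hne _ hmemq
      rw [hinvF_eq (f q) hne]
      apply Subtype.ext
      have h1 : w (f q) = (q.val.1)⁻¹ := hwq.symm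
      show ((w (f q))⁻¹, ClosedSubsets.smul (w (f q)) (f q).val) = q.val
      rw [h1, inv_inv]
      show (q.val.1, ClosedSubsets.smul (q.val.1)⁻¹
        (ClosedSubsets.smul (q.val.1) q.val.2)) = q.val
      rw [ClosedSubsets.smul_inv_smul']
    · -- right_inv'
      intro M hM
      have hM' : (M.val.carrier ∩ P).Nonempty := hM
      rw [hinvF_eq M hM']
      apply Subtype.ext
      show ClosedSubsets.smul ((w M)⁻¹) (ClosedSubsets.smul (w M) M.val) = M.val
      rw [ClosedSubsets.smul_inv_smul']
    pick_goal 4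
    pick_goal 4
    · -- open_source
      exact hPo.preimage ((continuous_fst.comp continuous_subtype_val).inv)
    · -- open_target
      exact (ClosedSubsets.isOpen_hit hPo hPne).preimage continuous_subtype_val
    · -- continuousOn_toFun
      exact Continuous.continuousOn (Continuous.subtype_mk
        (ClosedSubsets.continuous_fell_smul.comp continuous_subtype_val) _)
    · -- continuousOn_invFun
      show ContinuousOn invF T
      rw [(Topology.IsInducing.induced (Subtype.val : {p : G × ClosedSubsets G //
        p.2 ∈ transversal L₀ ∧ p.1 ∈ p.2.carrier} → G × ClosedSubsets G)).continuousOn_iff]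
      refine ContinuousOn.congr (f := fun M : ↥(transversal L₀) =>
          ((((w M)⁻¹, ClosedSubsets.smul (w M) M.val)) : G × ClosedSubsets G)) ?_ ?_
      · exact (hwcont.inv).prodMk
          (ClosedSubsets.continuous_fell_smul.comp_continuousOn
            (hwcont.prodMk continuous_subtype_val.continuousOn))
      · intro M hM
        have hM' : (M.val.carrier ∩ P).Nonempty := hM
        show (invF M : G × ClosedSubsets G) = _
        rw [hinvF_eq M hM']
    · -- p ∈ source
      exact hginv
    · -- EqOn
      intro q _
      rfl
end

section
/- Let d ≥ 1 and let αℝᵈ denote the one-point compactification of ℝᵈ, with added point ∞. Every self-homeomorphism f of ℝᵈ extends to a self-homeomorphism f̂ of αℝᵈ with f̂(∞) = ∞, and the map f ↦ f̂ from Homeo(ℝᵈ), with the compact-open topology, to C(αℝᵈ, αℝᵈ), with the compact-open topology, is a topological embedding. In other words, the compact-open topology on Homeo(ℝᵈ) coincides with the topology it inherits from the one-point compactification αℝᵈ. -/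
open Set Topology Filter OnePoint

/-- The compact-open topology on the group of self-homeomorphisms of a space, induced from the
compact-open topology on continuous maps via the inclusion. -/
def homeoCompactOpen (X : Type*) [TopologicalSpace X] : TopologicalSpace (X ≃ₜ X) :=
  TopologicalSpace.induced (fun f : X ≃ₜ X => (f : C(X, X))) ContinuousMap.compactOpen

section Aux

variable {E : Type*} [NormedAddCommGroup E] [NormedSpace ℝ E] [ProperSpace E]

set_option linter.unusedSectionVars false

/-- Cover a compact set inside an open set by finitely many closed balls centered in the
compact set and contained in the open set, with the open balls already covering. -/
lemma exists_ball_cover {P U : Set E} (hP : IsCompact P) (hU : IsOpen U) (hPU : P ⊆ U) :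
    ∃ (s : Finset E) (r : E → ℝ),
      (∀ c ∈ s, 0 < r c ∧ c ∈ P ∧ Metric.closedBall c (r c) ⊆ U) ∧
      P ⊆ ⋃ c ∈ s, Metric.ball c (r c) := by
  have h : ∀ p ∈ P, ∃ rp, 0 < rp ∧ Metric.closedBall p rp ⊆ U := by
    intro p hp
    rcases Metric.isOpen_iff.1 hU p (hPU hp) with ⟨ε, hε, hsub⟩
    exact ⟨ε / 2, by linarith, (Metric.closedBall_subset_ball (by linarith)).trans hsub⟩
  choose! r hr hrU using h
  obtain ⟨s, hsP, hcov⟩ := hP.elim_nhds_subcover (fun p => Metric.ball p (r p))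
      (fun p hp => Metric.ball_mem_nhds p (hr p hp))
  exact ⟨s, r, fun c hc => ⟨hr c (hsP c hc), hsP c hc, hrU c (hsP c hc)⟩, hcov⟩

/-- **Arens' lemma**: in a proper real normed space, for `C` compact and `L` closed, the set of
self-homeomorphisms `f` with `f(L) ∩ C = ∅` is open in the compact-open topology. -/
lemma arens_isOpen (C L : Set E) (hC : IsCompact C) (hL : IsClosed L) :
    IsOpen[homeoCompactOpen E] {f : E ≃ₜ E | ∀ x ∈ L, f x ∉ C} := by
  letI := homeoCompactOpen E
  have hcoe : Continuous (fun f : E ≃ₜ E => (f : C(E, E))) := continuous_induced_dom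
  rw [isOpen_iff_forall_mem_open]
  intro f₀ hf₀
  -- `P = f₀ ⁻¹ C` is compact and contained in the open set `Lᶜ`
  set P : Set E := f₀.symm '' C with hPdef
  have hPc : IsCompact P := hC.image f₀.symm.continuous
  have hPU : P ⊆ Lᶜ := by
    rintro x ⟨y, hy, rfl⟩ hmem
    exact hf₀ _ hmem (by rwa [Homeomorph.apply_symm_apply])
  obtain ⟨s, r, hs, hcov⟩ := exists_ball_cover hPc hL.isOpen_compl hPU
  set K : Set E := ⋃ c ∈ s, Metric.closedBall c (r c) with hKdef
  have hKcpt : IsCompact K :=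
    s.finite_toSet.isCompact_biUnion fun c _ => isCompact_closedBall c (r c)
  have hKcl : IsClosed K := s.finite_toSet.isClosed_biUnion fun c _ => Metric.isClosed_closedBall
  have hKU : K ⊆ Lᶜ := iUnion₂_subset fun c hc => (hs c hc).2.2
  have hPint : P ⊆ interior K :=
    hcov.trans (interior_maximal (iUnion₂_mono fun c _ => Metric.ball_subset_closedBall)
      (isOpen_biUnion fun c _ => Metric.isOpen_ball))
  have hfrK : IsCompact (frontier K) :=
    hKcpt.of_isClosed_subset isClosed_frontier (frontier_subset_closure.trans hKcl.closure_eq.subset)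
  have hfrC : ∀ x ∈ frontier K, f₀ x ∉ C := by
    intro x hx hxC
    have hxP : x ∈ P := ⟨f₀ x, hxC, f₀.symm_apply_apply x⟩
    rw [hKcl.frontier_eq] at hx
    exact hx.2 (hPint hxP)
  have hD : IsClosed (f₀ '' frontier K) := (hfrK.image f₀.continuous).isClosed
  have hCD : C ⊆ (f₀ '' frontier K)ᶜ := by
    intro y hy
    rintro ⟨x, hx, rfl⟩
    exact hfrC x hx hy
  obtain ⟨t, ρ, ht, htcov⟩ := exists_ball_cover hC hD.isOpen_compl hCD
  set C' : Set E := ⋃ c ∈ t, Metric.closedBall c (ρ c) with hC'def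
  have hC'cl : IsClosed C' := t.finite_toSet.isClosed_biUnion fun c _ => Metric.isClosed_closedBall
  have hC'fr : ∀ y ∈ C', y ∉ f₀ '' frontier K := by
    intro y hy
    obtain ⟨c, hc, hyc⟩ := mem_iUnion₂.1 hy
    exact fun hmem => (ht c hc).2.2 hyc hmem
  refine ⟨{f : E ≃ₜ E | MapsTo (f : E → E) (frontier K) C'ᶜ} ∩
      ⋂ c ∈ t, {f : E ≃ₜ E | f (f₀.symm c) ∈ Metric.ball c (ρ c)}, ?_, ?_, ?_⟩
  · -- the neighborhood is contained in our set
    rintro f ⟨h1, h2⟩ x hxL hfxC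
    simp only [mem_iInter, mem_setOf_eq] at h2
    obtain ⟨c, hc, hzc⟩ := mem_iUnion₂.1 (htcov hfxC)
    have hballC' : Metric.ball c (ρ c) ⊆ C' := fun y hy =>
      mem_iUnion₂.2 ⟨c, hc, Metric.ball_subset_closedBall hy⟩
    set W := connectedComponentIn C' c with hWdef
    have hballW : Metric.ball c (ρ c) ⊆ W :=
      (convex_ball c (ρ c)).isPreconnected.subset_connectedComponentIn
        (Metric.mem_ball_self (ht c hc).1) hballC'
    have hxint : f₀.symm c ∈ interior K := hPint ⟨c, (ht c hc).2.1, rfl⟩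
    have hu : IsOpen (f '' interior K) := f.isOpenMap _ isOpen_interior
    have hv : IsOpen ((f '' K)ᶜ) := (hKcpt.image f.continuous).isClosed.isOpen_compl
    have hdisj : Disjoint (f '' interior K) ((f '' K)ᶜ) :=
      Set.disjoint_left.2 fun a ha hac => hac (image_mono (f := (f : E → E)) interior_subset ha)
    have hWsub : W ⊆ f '' interior K ∪ (f '' K)ᶜ := by
      intro y hyW
      by_cases hyK : y ∈ f '' K
      · obtain ⟨k, hk, rfl⟩ := hyK
        by_cases hki : k ∈ interior K
        · exact Or.inl ⟨k, hki, rfl⟩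
        · have hkfr : k ∈ frontier K := by rw [hKcl.frontier_eq]; exact ⟨hk, hki⟩
          exact absurd (connectedComponentIn_subset C' c hyW) (h1 hkfr)
      · exact Or.inr hyK
    have hWu : W ⊆ f '' interior K :=
      isPreconnected_connectedComponentIn.subset_left_of_subset_union hu hv hdisj hWsub
        ⟨f (f₀.symm c), hballW (h2 c hc), ⟨f₀.symm c, hxint, rfl⟩⟩
    obtain ⟨k, hk, hkx⟩ := hWu (hballW hzc)
    exact hKU (interior_subset (f.injective hkx ▸ hk)) hxL
  · -- the neighborhood is open
    refine IsOpen.inter ?_ (isOpen_biInter_finset fun c hc => ?_)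
    · exact (ContinuousMap.isOpen_setOf_mapsTo hfrK hC'cl.isOpen_compl).preimage hcoe
    · have heq : {f : E ≃ₜ E | f (f₀.symm c) ∈ Metric.ball c (ρ c)} =
          (fun f : E ≃ₜ E => (f : C(E, E))) ⁻¹'
            {g : C(E, E) | MapsTo g {f₀.symm c} (Metric.ball c (ρ c))} := by
        ext f
        simp [Set.mapsTo_singleton]
      rw [heq]
      exact (ContinuousMap.isOpen_setOf_mapsTo isCompact_singleton Metric.isOpen_ball).preimage hcoe
  · -- `f₀` belongs to the neighborhood
    refine ⟨fun x hx hmem => hC'fr _ hmem ⟨x, hx, rfl⟩, ?_⟩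
    simp only [mem_iInter, mem_setOf_eq]
    intro c hc
    rw [Homeomorph.apply_symm_apply]
    exact Metric.mem_ball_self (ht c hc).1

end Aux

/-- For `d ≥ 1`, every self-homeomorphism of `ℝᵈ` extends to a
self-homeomorphism of the one-point compactification `αℝᵈ` fixing `∞`, and the resulting map
from `Homeo(ℝᵈ)` (compact-open topology) into `C(αℝᵈ, αℝᵈ)` (compact-open topology) is a
topological embedding; i.e. the compact-open topology on `Homeo(ℝᵈ)` coincides with the topology
inherited from the one-point compactification. -/
theorem homeo_euclidean_embeds_in_onePoint (d : ℕ) (hd : 1 ≤ d) :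
    letI := homeoCompactOpen (EuclideanSpace ℝ (Fin d))
    ∃ ext : (EuclideanSpace ℝ (Fin d) ≃ₜ EuclideanSpace ℝ (Fin d)) →
        (OnePoint (EuclideanSpace ℝ (Fin d)) ≃ₜ OnePoint (EuclideanSpace ℝ (Fin d))),
      (∀ f, ext f ∞ = ∞) ∧
      (∀ f (x : EuclideanSpace ℝ (Fin d)),
        ext f (x : OnePoint (EuclideanSpace ℝ (Fin d))) =
          ((f x : EuclideanSpace ℝ (Fin d)) : OnePoint (EuclideanSpace ℝ (Fin d)))) ∧
      Topology.IsEmbedding (fun f =>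
        ((ext f : OnePoint (EuclideanSpace ℝ (Fin d)) ≃ₜ OnePoint (EuclideanSpace ℝ (Fin d))) :
          C(OnePoint (EuclideanSpace ℝ (Fin d)), OnePoint (EuclideanSpace ℝ (Fin d))))) := by
  classical
  set X := EuclideanSpace ℝ (Fin d) with hXdef
  letI := homeoCompactOpen X
  haveI : T4Space (OnePoint X) := {}
  set Φ : (X ≃ₜ X) → C(OnePoint X, OnePoint X) :=
    fun f => ((f.onePointCongr : OnePoint X ≃ₜ OnePoint X) : C(OnePoint X, OnePoint X)) with hΦdef
  have hΦcoe : ∀ (f : X ≃ₜ X) (x : X), Φ f (x : OnePoint X) = ((f x : X) : OnePoint X) :=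
    fun _ _ => rfl
  have hΦinf : ∀ f : X ≃ₜ X, Φ f ∞ = ∞ := fun _ => rfl
  -- continuity of Φ : the hard direction
  have hΦcont : Continuous Φ := by
    rw [ContinuousMap.continuous_compactOpen]
    intro K hK V hV
    by_cases hKinf : ∞ ∈ K
    · by_cases hVinf : ∞ ∈ V
      · -- K contains ∞ and V contains ∞ : reduce to Arens' lemma
        set L : Set X := ((↑) : X → OnePoint X) ⁻¹' K with hLdef
        set C : Set X := ((↑) : X → OnePoint X) ⁻¹' Vᶜ with hCdef
        have hLcl : IsClosed L := hK.isClosed.preimage OnePoint.continuous_coe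
        have hCc : IsCompact C := by
          refine (OnePoint.isOpenEmbedding_coe.isInducing.isCompact_preimage_iff ?_).2
            hV.isClosed_compl.isCompact
          intro a ha
          induction a using OnePoint.rec with
          | infty => exact absurd hVinf ha
          | coe x => exact ⟨x, rfl⟩
        have hset : {f : X ≃ₜ X | MapsTo (Φ f) K V} = {f : X ≃ₜ X | ∀ x ∈ L, f x ∉ C} := by
          ext f
          simp only [mem_setOf_eq]
          constructor
          · intro hf x hxL hxC
            exact hxC (hf hxL)
          · intro hf a haK
            induction a using OnePoint.rec with
            | infty => exact hVinf
            | coe x =>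
              by_contra hnot
              exact hf x haK hnot
        rw [hset]
        exact arens_isOpen C L hCc hLcl
      · -- ∞ ∈ K but ∞ ∉ V : the condition is impossible
        convert isOpen_empty (X := X ≃ₜ X)
        ext f
        simp only [mem_setOf_eq, mem_empty_iff_false, iff_false]
        intro hf
        exact hVinf (hf hKinf)
    · -- ∞ ∉ K : the condition is a genuine compact-open condition inside X
      set K₀ : Set X := ((↑) : X → OnePoint X) ⁻¹' K with hK₀def
      set V₀ : Set X := ((↑) : X → OnePoint X) ⁻¹' V with hV₀def
      have hKr : K ⊆ range ((↑) : X → OnePoint X) := by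
        intro a ha
        induction a using OnePoint.rec with
        | infty => exact absurd ha hKinf
        | coe x => exact ⟨x, rfl⟩
      have hK₀c : IsCompact K₀ :=
        (OnePoint.isOpenEmbedding_coe.isInducing.isCompact_preimage_iff hKr).2 hK
      have hV₀o : IsOpen V₀ := hV.preimage OnePoint.continuous_coe
      have hset : {f : X ≃ₜ X | MapsTo (Φ f) K V} =
          (fun f : X ≃ₜ X => (f : C(X, X))) ⁻¹' {g : C(X, X) | MapsTo g K₀ V₀} := by
        ext f
        simp only [mem_setOf_eq, mem_preimage]
        constructor
        · intro hf x hx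
          exact hf hx
        · intro hf a ha
          obtain ⟨x, rfl⟩ := hKr ha
          exact hf ha
      rw [hset]
      exact (ContinuousMap.isOpen_setOf_mapsTo hK₀c hV₀o).preimage continuous_induced_dom
  -- the easy direction: compact-open conditions on X are induced via Φ
  have hcoe_cont : Continuous[TopologicalSpace.induced Φ ContinuousMap.compactOpen,
      ContinuousMap.compactOpen] (fun f : X ≃ₜ X => (f : C(X, X))) := by
    letI tΦ := TopologicalSpace.induced Φ ContinuousMap.compactOpen
    rw [ContinuousMap.continuous_compactOpen]
    intro K hK V hV
    have hset : {f : X ≃ₜ X | MapsTo ((f : C(X, X)) : X → X) K V} =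
        Φ ⁻¹' {g : C(OnePoint X, OnePoint X) |
          MapsTo g (((↑) : X → OnePoint X) '' K) (((↑) : X → OnePoint X) '' V)} := by
      ext f
      simp only [mem_setOf_eq, mem_preimage]
      constructor
      · rintro hf a ⟨x, hx, rfl⟩
        exact ⟨f x, hf hx, (hΦcoe f x).symm⟩
      · intro hf x hx
        obtain ⟨v, hv, hveq⟩ := hf ⟨x, hx, rfl⟩
        rw [hΦcoe f x] at hveq
        exact (OnePoint.coe_eq_coe.1 hveq) ▸ hv
    rw [hset]
    exact (ContinuousMap.isOpen_setOf_mapsTo (hK.image OnePoint.continuous_coe)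
      (OnePoint.isOpenEmbedding_coe.isOpenMap _ hV)).preimage continuous_induced_dom
  have heq : (homeoCompactOpen X) = TopologicalSpace.induced Φ ContinuousMap.compactOpen :=
    le_antisymm (continuous_iff_le_induced.1 hΦcont) (continuous_iff_le_induced.1 hcoe_cont)
  have hinj : Function.Injective Φ := by
    intro f g h
    apply Homeomorph.ext
    intro x
    have := DFunLike.congr_fun h ((x : OnePoint X))
    rw [hΦcoe f x, hΦcoe g x] at this
    exact OnePoint.coe_eq_coe.1 this
  exact ⟨fun f => f.onePointCongr, fun f => rfl, fun f x => rfl, ⟨⟨heq⟩, hinj⟩⟩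
end

section
/- Let G be a locally compact, second countable, Hausdorff topological group, let L₀ ∈ 𝒞(G) be uniformly separated, and let L ∈ Ξ_{L₀}. Let 𝒢_{L₀} := {(g, L') ∈ G × 𝒞(G) : L' ∈ Ξ_{L₀} and g ∈ L'} with the subspace topology from G × 𝒞(G) (Fell topology on the second factor), and let f : 𝒢_{L₀} → ℂ be continuous with compact support. Then: (i) for every g' ∈ L, the sum Σ_{g ∈ L} f(g'g⁻¹, g·L) φ(g) has only finitely many nonzero terms for every φ : L → ℂ; and (ii) the formula (π_L(f)φ)(g') := Σ_{g ∈ L} f(g'g⁻¹, g·L) φ(g) defines a bounded linear operator π_L(f) on the Hilbert space ℓ²(L) of square-summable complex-valued functions on L. -/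
open Set Topology Filter

variable {G : Type*} [Group G] [TopologicalSpace G] [IsTopologicalGroup G]

/-- The groupoid `𝒢_{L₀}` canonically associated to a pattern `L₀`, as a topological space:
tuples `(g, L')` with `L' ∈ Ξ_{L₀}` and `g ∈ L'`, topologized as a subspace of `G × 𝒞(G)`
(Fell topology on the second factor). -/
abbrev PatternGroupoid (L₀ : ClosedSubsets G) : Type _ :=
  {p : G × ClosedSubsets G // p.2 ∈ transversal L₀ ∧ p.1 ∈ p.2.carrier}

/-! ### Auxiliary lemmas -/

open scoped ENNReal NNReal

private lemma rpow_two_eq (x : ℝ) : x ^ (2 : ℝ≥0∞).toReal = x ^ 2 := by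
  rw [show ((2 : ℝ≥0∞).toReal) = ((2:ℕ):ℝ) by norm_num, Real.rpow_natCast]

/-- A continuous compactly supported function is bounded. -/
private lemma exists_norm_bound {α : Type*} [TopologicalSpace α] (f : α → ℂ)
    (hc : Continuous f) (hs : HasCompactSupport f) :
    ∃ M : ℝ, 0 ≤ M ∧ ∀ x, ‖f x‖ ≤ M := by
  have htf : IsCompact (tsupport f) := hs
  obtain ⟨C, hC⟩ := (htf.image (continuous_norm.comp hc)).bddAbove
  refine ⟨max C 0, le_max_right _ _, fun x => ?_⟩
  by_cases hx : x ∈ tsupport f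
  · exact le_trans (hC ⟨x, hx, rfl⟩) (le_max_left _ _)
  · simp [image_eq_zero_of_notMem_tsupport hx]

/-- A Schur-type criterion: a kernel which is uniformly bounded and has uniformly
finitely many nonzero entries in each row and each column defines a bounded operator
on `ℓ²`. -/
private lemma schur_clm {ι : Type*} (k : ι → ι → ℂ) (M : ℝ) (hM : 0 ≤ M) (n m : ℕ)
    (hk : ∀ i j, ‖k i j‖ ≤ M)
    (hrow : ∀ i, ∃ s : Finset ι, s.card ≤ n ∧ ∀ j, k i j ≠ 0 → j ∈ s)
    (hcol : ∀ j, ∃ s : Finset ι, s.card ≤ m ∧ ∀ i, k i j ≠ 0 → i ∈ s) :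
    ∃ T : lp (fun _ : ι => ℂ) 2 →L[ℂ] lp (fun _ : ι => ℂ) 2,
      ∀ φ i, T φ i = ∑' j, k i j * φ j := by
  classical
  have h2 : (0:ℝ) < (2 : ℝ≥0∞).toReal := by norm_num
  choose s hs_card hs_mem using hrow
  choose c hc_card hc_mem using hcol
  set t : ι → Finset ι := fun i => (s i).filter (fun j => k i j ≠ 0) with ht
  have ht_mem : ∀ i j, k i j ≠ 0 → j ∈ t i := fun i j h =>
    Finset.mem_filter.2 ⟨hs_mem i j h, h⟩
  have ht_zero : ∀ i j, j ∉ t i → k i j = 0 := by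
    intro i j hj; by_contra h; exact hj (ht_mem i j h)
  have ht_card : ∀ i, (t i).card ≤ n := fun i =>
    le_trans (Finset.card_filter_le _ _) (hs_card i)
  set c' : ι → Finset ι := fun j => (c j).filter (fun i => k i j ≠ 0) with hc'
  have hc'_mem : ∀ i j, k i j ≠ 0 → i ∈ c' j := fun i j h =>
    Finset.mem_filter.2 ⟨hc_mem j i h, h⟩
  have hc'_zero : ∀ i j, i ∉ c' j → k i j = 0 := by
    intro i j hj; by_contra h; exact hj (hc'_mem i j h)
  have hc'_card : ∀ j, (c' j).card ≤ m := fun j =>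
    le_trans (Finset.card_filter_le _ _) (hc_card j)
  -- the candidate image function
  set ψ : (lp (fun _ : ι => ℂ) 2) → ι → ℂ := fun φ i => ∑' j, k i j * φ j with hψ
  have htsum : ∀ φ i, ψ φ i = ∑ j ∈ t i, k i j * φ j := fun φ i =>
    tsum_eq_sum (fun j hj => by rw [ht_zero i j hj, zero_mul])
  -- square-summability estimates, for a fixed φ
  have main : ∀ φ : lp (fun _ : ι => ℂ) 2,
      Summable (fun i => ‖ψ φ i‖ ^ 2) ∧
      ∑' i, ‖ψ φ i‖ ^ 2 ≤ (n * m * M ^ 2) * ∑' j, ‖φ j‖ ^ 2 := by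
    intro φ
    have hsq_sum : Summable fun j => ‖φ j‖ ^ 2 := by
      have := (lp.memℓp φ).summable h2
      exact this.congr fun j => rpow_two_eq _
    set H : ι → ι → ℝ := fun i j => if k i j ≠ 0 then ‖φ j‖ ^ 2 else 0 with hH
    have hH_nonneg : ∀ i j, 0 ≤ H i j := by
      intro i j; simp only [hH]; split
      · positivity
      · exact le_rfl
    have hcol_summable : ∀ j, Summable fun i => H i j := by
      intro j
      refine summable_of_ne_finset_zero (s := c' j) fun i hi => ?_
      simp only [hH, if_neg (not_not.2 (hc'_zero i j hi))]
    have hcol_tsum_eq : ∀ j, ∑' i, H i j = ∑ i ∈ c' j, H i j := fun j =>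
      tsum_eq_sum (fun i hi => by simp only [hH, if_neg (not_not.2 (hc'_zero i j hi))])
    have hcol_tsum_le : ∀ j, ∑' i, H i j ≤ m * ‖φ j‖ ^ 2 := by
      intro j
      rw [hcol_tsum_eq j]
      calc ∑ i ∈ c' j, H i j ≤ ∑ _i ∈ c' j, ‖φ j‖ ^ 2 := by
            refine Finset.sum_le_sum fun i _ => ?_
            simp only [hH]; split
            · exact le_rfl
            · positivity
        _ = ((c' j).card : ℝ) * ‖φ j‖ ^ 2 := by rw [Finset.sum_const, nsmul_eq_mul]
        _ ≤ m * ‖φ j‖ ^ 2 := by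
            gcongr
            exact_mod_cast hc'_card j
    -- summability of the swapped double family
    have hHsw : Summable (fun p : ι × ι => H p.2 p.1) := by
      refine (summable_prod_of_nonneg fun p => hH_nonneg p.2 p.1).2 ⟨fun j => hcol_summable j, ?_⟩
      refine Summable.of_nonneg_of_le (fun j => tsum_nonneg fun i => hH_nonneg i j)
        (fun j => hcol_tsum_le j) (hsq_sum.mul_left _)
    have hHprod : Summable (fun p : ι × ι => H p.1 p.2) := by
      have := (Equiv.prodComm ι ι).summable_iff (f := fun p : ι × ι => H p.1 p.2)
      exact this.1 hHsw
    have hrow_summable : ∀ i, Summable fun j => H i j :=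
      ((summable_prod_of_nonneg fun p => hH_nonneg p.1 p.2).1 hHprod).1
    have hFsum : Summable fun i => ∑' j, H i j :=
      ((summable_prod_of_nonneg fun p => hH_nonneg p.1 p.2).1 hHprod).2
    have hFtsum_le : ∑' i, ∑' j, H i j ≤ m * ∑' j, ‖φ j‖ ^ 2 := by
      have e1 : ∑' i, ∑' j, H i j = ∑' p : ι × ι, H p.1 p.2 :=
        (Summable.tsum_prod' hHprod fun i => hrow_summable i).symm
      have e2 : ∑' p : ι × ι, H p.1 p.2 = ∑' p : ι × ι, H p.2 p.1 := by
        exact ((Equiv.prodComm ι ι).tsum_eq (f := fun p : ι × ι => H p.1 p.2)).symm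
      have e3 : ∑' p : ι × ι, H p.2 p.1 = ∑' j, ∑' i, H i j :=
        Summable.tsum_prod' hHsw fun j => hcol_summable j
      rw [e1, e2, e3]
      calc ∑' j, ∑' i, H i j ≤ ∑' j, (m : ℝ) * ‖φ j‖ ^ 2 :=
            Summable.tsum_le_tsum hcol_tsum_le
              (((summable_prod_of_nonneg fun p => hH_nonneg p.2 p.1).1 hHsw).2)
              (hsq_sum.mul_left _)
        _ = m * ∑' j, ‖φ j‖ ^ 2 := tsum_mul_left
    -- row estimate relating the auxiliary sums and ψ
    have hrow_eq : ∀ i, ∑' j, H i j = ∑ j ∈ t i, ‖φ j‖ ^ 2 := by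
      intro i
      rw [tsum_eq_sum (s := t i)
        (fun j hj => by simp only [hH, if_neg (not_not.2 (ht_zero i j hj))])]
      refine Finset.sum_congr rfl fun j hj => ?_
      have : k i j ≠ 0 := (Finset.mem_filter.1 hj).2
      simp only [hH, if_pos this]
    have hpt : ∀ i, ‖ψ φ i‖ ^ 2 ≤ (n * M ^ 2) * ∑' j, H i j := by
      intro i
      have h1 : ‖ψ φ i‖ ≤ M * ∑ j ∈ t i, ‖φ j‖ := by
        rw [htsum φ i]
        calc ‖∑ j ∈ t i, k i j * φ j‖ ≤ ∑ j ∈ t i, ‖k i j * φ j‖ := norm_sum_le _ _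
          _ = ∑ j ∈ t i, ‖k i j‖ * ‖φ j‖ := by simp [norm_mul]
          _ ≤ ∑ j ∈ t i, M * ‖φ j‖ :=
              Finset.sum_le_sum fun j _ => mul_le_mul_of_nonneg_right (hk i j) (norm_nonneg _)
          _ = M * ∑ j ∈ t i, ‖φ j‖ := by rw [Finset.mul_sum]
      have h2' : (∑ j ∈ t i, ‖φ j‖) ^ 2 ≤ (n : ℝ) * ∑ j ∈ t i, ‖φ j‖ ^ 2 := by
        have := Finset.sum_mul_sq_le_sq_mul_sq (t i) (fun _ => (1:ℝ)) (fun j => ‖φ j‖)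
        simp only [one_mul, one_pow, Finset.sum_const, nsmul_eq_mul, mul_one] at this
        calc (∑ j ∈ t i, ‖φ j‖) ^ 2 ≤ ((t i).card : ℝ) * ∑ j ∈ t i, ‖φ j‖ ^ 2 := this
          _ ≤ (n : ℝ) * ∑ j ∈ t i, ‖φ j‖ ^ 2 := by
              refine mul_le_mul_of_nonneg_right ?_ (Finset.sum_nonneg fun j _ => by positivity)
              exact_mod_cast ht_card i
      calc ‖ψ φ i‖ ^ 2 ≤ (M * ∑ j ∈ t i, ‖φ j‖) ^ 2 := by
            exact pow_le_pow_left₀ (norm_nonneg _) h1 2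
        _ = M ^ 2 * (∑ j ∈ t i, ‖φ j‖) ^ 2 := by ring
        _ ≤ M ^ 2 * ((n : ℝ) * ∑ j ∈ t i, ‖φ j‖ ^ 2) := by
            have := h2'
            gcongr
        _ = (n * M ^ 2) * ∑ j ∈ t i, ‖φ j‖ ^ 2 := by ring
        _ = (n * M ^ 2) * ∑' j, H i j := by rw [hrow_eq i]
    have hsummable : Summable fun i => ‖ψ φ i‖ ^ 2 :=
      Summable.of_nonneg_of_le (fun i => by positivity) hpt (hFsum.mul_left _)
    refine ⟨hsummable, ?_⟩
    calc ∑' i, ‖ψ φ i‖ ^ 2 ≤ ∑' i, (n * M ^ 2) * ∑' j, H i j :=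
          Summable.tsum_le_tsum hpt hsummable (hFsum.mul_left _)
      _ = (n * M ^ 2) * ∑' i, ∑' j, H i j := tsum_mul_left
      _ ≤ (n * M ^ 2) * (m * ∑' j, ‖φ j‖ ^ 2) := by
          have hnm : (0:ℝ) ≤ n * M ^ 2 := by positivity
          exact mul_le_mul_of_nonneg_left hFtsum_le hnm
      _ = (n * m * M ^ 2) * ∑' j, ‖φ j‖ ^ 2 := by ring
  -- membership in ℓ²
  have hmem : ∀ φ : lp (fun _ : ι => ℂ) 2, Memℓp (ψ φ) 2 := by
    intro φ
    refine memℓp_gen ?_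
    exact ((main φ).1).congr fun i => (rpow_two_eq _).symm
  -- the linear map
  set T₀ : lp (fun _ : ι => ℂ) 2 →ₗ[ℂ] lp (fun _ : ι => ℂ) 2 :=
    { toFun := fun φ => ⟨ψ φ, hmem φ⟩
      map_add' := by
        intro φ φ'
        ext i
        show ψ (φ + φ') i = ψ φ i + ψ φ' i
        rw [htsum, htsum, htsum, ← Finset.sum_add_distrib]
        refine Finset.sum_congr rfl fun j _ => ?_
        have : (↑(φ + φ') : ∀ _ : ι, ℂ) j = φ j + φ' j := by
          rw [lp.coeFn_add]; rfl
        rw [this, mul_add]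
      map_smul' := by
        intro a φ
        ext i
        show ψ (a • φ) i = a • ψ φ i
        rw [htsum, htsum, Finset.smul_sum]
        refine Finset.sum_congr rfl fun j _ => ?_
        have : (↑(a • φ) : ∀ _ : ι, ℂ) j = a • φ j := by
          rw [lp.coeFn_smul]; rfl
        rw [this, smul_eq_mul, smul_eq_mul]; ring } with hT₀
  set C : ℝ := Real.sqrt (n * m * M ^ 2) with hC
  have hbound : ∀ φ, ‖T₀ φ‖ ≤ C * ‖φ‖ := by
    intro φ
    have hnormsq : ‖T₀ φ‖ ^ 2 = ∑' i, ‖ψ φ i‖ ^ 2 := by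
      have := lp.norm_rpow_eq_tsum h2 (T₀ φ)
      rw [rpow_two_eq] at this
      rw [this]
      exact tsum_congr fun i => rpow_two_eq _
    have hφsq : ‖φ‖ ^ 2 = ∑' j, ‖φ j‖ ^ 2 := by
      have := lp.norm_rpow_eq_tsum h2 φ
      rw [rpow_two_eq] at this
      rw [this]
      exact tsum_congr fun j => rpow_two_eq _
    have key : ‖T₀ φ‖ ^ 2 ≤ (C * ‖φ‖) ^ 2 := by
      rw [hnormsq]
      calc ∑' i, ‖ψ φ i‖ ^ 2 ≤ (n * m * M ^ 2) * ∑' j, ‖φ j‖ ^ 2 := (main φ).2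
        _ = (n * m * M ^ 2) * ‖φ‖ ^ 2 := by rw [hφsq]
        _ = (C * ‖φ‖) ^ 2 := by
            rw [mul_pow, hC, Real.sq_sqrt (by positivity)]
    have := Real.sqrt_le_sqrt key
    rwa [Real.sqrt_sq (norm_nonneg _), Real.sqrt_sq (by positivity)] at this
  refine ⟨T₀.mkContinuous C hbound, fun φ i => ?_⟩
  rfl

/-- Every translate of a `U`-separated set is `U`-separated. -/
private lemma sseparated_smul {U : Set G} {L₀ : ClosedSubsets G} (hsep : SSeparated U L₀.carrier)
    (h : G) : SSeparated U (ClosedSubsets.smul h L₀).carrier := by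
  intro g x hx y hy
  obtain ⟨⟨lx, hlx, hlx'⟩, ⟨ux, hux, hux'⟩⟩ := hx
  obtain ⟨⟨ly, hly, hly'⟩, ⟨uy, huy, huy'⟩⟩ := hy
  have key : ∀ (l u z : G), l ∈ L₀.carrier → u ∈ U → l * h⁻¹ = z → u * g⁻¹ = z →
      z * h ∈ L₀.carrier ∩ (fun x => x * (h⁻¹ * g)⁻¹) '' U := by
    intro l u z hl hu h1 h2
    constructor
    · have : z * h = l := by rw [← h1]; group
      rw [this]; exact hl
    · exact ⟨u, hu, by rw [← h2]; group⟩
  have hx' := key lx ux x hlx hux hlx' hux'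
  have hy' := key ly uy y hly huy hly' huy'
  have hxy : x * h = y * h := hsep (h⁻¹ * g) hx' hy'
  exact mul_right_cancel hxy

/-- Every member of the hull of a `U`-separated set is `U`-separated (for open `U`). -/
private lemma sseparated_of_mem_hull [T2Space G] {U : Set G} (hU : IsOpen U)
    {L₀ L : ClosedSubsets G} (hsep : SSeparated U L₀.carrier) (hL : L ∈ hull L₀) :
    SSeparated U L.carrier := by
  intro g x hx y hy
  by_contra hxy
  obtain ⟨A, B, hA, hB, hxA, hyB, hAB⟩ := t2_separation hxy
  set V : Set G := (fun z => z * g⁻¹) '' U with hV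
  have hVopen : IsOpen V := (Homeomorph.mulRight g⁻¹).isOpenMap U hU
  set A' : Set G := A ∩ V with hA'
  set B' : Set G := B ∩ V with hB'
  set W : Set (ClosedSubsets G) := {Y : ClosedSubsets G | Y.carrier ∩ (∅ : Set G) = ∅ ∧
      ∀ F ∈ ({A', B'} : Set (Set G)), (Y.carrier ∩ F).Nonempty} with hW
  have hWopen : IsOpen W := by
    refine TopologicalSpace.isOpen_generateFrom_of_mem ?_
    refine ⟨∅, {A', B'}, isCompact_empty, (Set.finite_singleton B').insert A', ?_, rfl⟩
    intro F hF
    rcases hF with rfl | hF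
    · exact ⟨hA.inter hVopen, ⟨x, hxA, hx.2⟩⟩
    · rw [Set.mem_singleton_iff] at hF; subst hF
      exact ⟨hB.inter hVopen, ⟨y, hyB, hy.2⟩⟩
  have hLW : L ∈ W := by
    refine ⟨Set.inter_empty _, ?_⟩
    intro F hF
    rcases hF with rfl | hF
    · exact ⟨x, hx.1, hxA, hx.2⟩
    · rw [Set.mem_singleton_iff] at hF; subst hF
      exact ⟨y, hy.1, hyB, hy.2⟩
  obtain ⟨C, hCW, h, rfl⟩ := mem_closure_iff.mp hL W hWopen hLW
  obtain ⟨a, haC, haA, haV⟩ := hCW.2 A' (Set.mem_insert _ _)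
  obtain ⟨b, hbC, hbB, hbV⟩ := hCW.2 B' (Set.mem_insert_of_mem _ rfl)
  have hab : a = b := sseparated_smul hsep h g ⟨haC, haV⟩ ⟨hbC, hbV⟩
  exact (Set.disjoint_left.mp hAB haA) (hab ▸ hbB)

/-- A `U`-separated set meets every right translate of a fixed compact set in a uniformly
bounded number of points. -/
private lemma exists_card_bound {U Lc : Set G} {u : G} (hu : u ∈ U) (hU : IsOpen U)
    (hsep : SSeparated U Lc) {K : Set G} (hK : IsCompact K) :
    ∃ n : ℕ, ∀ h : G, ∃ s : Finset G,
      s.card ≤ n ∧ ∀ z ∈ Lc, z ∈ (fun w => w * h) '' K → z ∈ s := by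
  classical
  have hcover : K ⊆ ⋃ c : K, (fun z => z * (u⁻¹ * (c : G))) '' U := by
    intro x hx
    exact Set.mem_iUnion.2 ⟨⟨x, hx⟩, ⟨u, hu, by group⟩⟩
  obtain ⟨t, ht⟩ := hK.elim_finite_subcover (fun c : K => (fun z => z * (u⁻¹ * (c : G))) '' U)
    (fun c => (Homeomorph.mulRight _).isOpenMap U hU) hcover
  refine ⟨t.card, fun h => ?_⟩
  set P : K → Set G := fun c => (fun z => z * (u⁻¹ * (c : G) * h)) '' U with hP
  have hsubsing : ∀ c : K, (Lc ∩ P c).Subsingleton := by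
    intro c
    have := hsep (u⁻¹ * (c : G) * h)⁻¹
    simpa [hP, inv_inv] using this
  set pick : K → G := fun c => if hne : (Lc ∩ P c).Nonempty then hne.choose else 1 with hpick
  refine ⟨t.image pick, Finset.card_image_le, ?_⟩
  rintro z hz ⟨w, hwK, rfl⟩
  obtain ⟨c, hct, v, hv, hvw⟩ : ∃ c ∈ t, ∃ v ∈ U, v * (u⁻¹ * (c : G)) = w := by
    have := ht hwK
    simp only [Set.mem_iUnion, Set.mem_image] at this
    obtain ⟨c, hc, v, hv, hvw⟩ := this
    exact ⟨c, hc, v, hv, hvw⟩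
  have hzP : w * h ∈ P c := ⟨v, hv, by rw [← hvw]; group⟩
  have hne : (Lc ∩ P c).Nonempty := ⟨w * h, hz, hzP⟩
  have hpc : pick c = hne.choose := dif_pos hne
  have heq : w * h = pick c := by
    rw [hpc]
    exact hsubsing c ⟨hz, hzP⟩ hne.choose_spec
  show w * h ∈ _
  rw [heq]
  exact Finset.mem_image_of_mem pick hct

/-- Let `L₀` be uniformly separated, `L ∈ Ξ_{L₀}` and `f : 𝒢_{L₀} → ℂ`
continuous with compact support.  Then (i) for every `g' ∈ L` and any `φ : L → ℂ`, the sum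
`Σ_{g ∈ L} f(g'g⁻¹, g·L) φ(g)` has only finitely many nonzero terms; and (ii) this formula
defines a bounded linear operator on the Hilbert space `ℓ²(L)`.  (The hypothesis `hmem`, which
records the true fact that `g·L ∈ Ξ_{L₀}` for `g ∈ L`, is quantified so that the arguments of
`f` can be written down.) -/
theorem leftRegularRep_finite_and_bounded (G : Type*) [Group G] [TopologicalSpace G]
    [IsTopologicalGroup G] [LocallyCompactSpace G] [SecondCountableTopology G] [T2Space G]
    (L₀ : ClosedSubsets G) (hsep : UniformlySeparated L₀.carrier)
    (L : ClosedSubsets G) (hL : L ∈ transversal L₀)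
    (hmem : ∀ g ∈ L.carrier, ClosedSubsets.smul g L ∈ transversal L₀)
    (f : PatternGroupoid L₀ → ℂ) (hfcont : Continuous f) (hfsupp : HasCompactSupport f) :
    (∀ (g' : G) (hg' : g' ∈ L.carrier) (φ : ↥L.carrier → ℂ),
      {g : ↥L.carrier |
        f ⟨(g' * (g.1)⁻¹, ClosedSubsets.smul g.1 L), hmem g.1 g.2, ⟨g', hg', rfl⟩⟩ * φ g
          ≠ 0}.Finite) ∧
    (∃ T : lp (fun _ : ↥L.carrier => ℂ) 2 →L[ℂ] lp (fun _ : ↥L.carrier => ℂ) 2,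
      ∀ (φ : lp (fun _ : ↥L.carrier => ℂ) 2) (g' : ↥L.carrier),
        T φ g' = ∑' g : ↥L.carrier,
          f ⟨(g'.1 * (g.1)⁻¹, ClosedSubsets.smul g.1 L), hmem g.1 g.2, ⟨g'.1, g'.2, rfl⟩⟩
            * φ g) := by
  classical
  obtain ⟨U, hUopen, ⟨u, hu⟩, hUsep⟩ := hsep
  have hLsep : SSeparated U L.carrier := sseparated_of_mem_hull hUopen hUsep hL.1
  obtain ⟨M, hM0, hMb⟩ := exists_norm_bound f hfcont hfsupp
  have htf : IsCompact (tsupport f) := hfsupp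
  have hKc : IsCompact ((fun p : PatternGroupoid L₀ => p.1.1) '' tsupport f) :=
    htf.image (continuous_fst.comp continuous_subtype_val)
  set K : Set G := (fun p : PatternGroupoid L₀ => p.1.1) '' tsupport f with hK
  set k : ↥L.carrier → ↥L.carrier → ℂ := fun g' g =>
    f ⟨(g'.1 * (g.1)⁻¹, ClosedSubsets.smul g.1 L), hmem g.1 g.2, ⟨g'.1, g'.2, rfl⟩⟩ with hkdef
  have hkK : ∀ g' g, k g' g ≠ 0 → g'.1 * (g.1)⁻¹ ∈ K := by
    intro g' g h
    exact ⟨_, subset_tsupport f h, rfl⟩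
  have hbd : ∀ g' g, ‖k g' g‖ ≤ M := fun g' g => hMb _
  obtain ⟨n, hn⟩ := exists_card_bound hu hUopen hLsep hKc.inv
  obtain ⟨m, hm⟩ := exists_card_bound hu hUopen hLsep hKc
  have hrow : ∀ i : ↥L.carrier, ∃ s : Finset ↥L.carrier,
      s.card ≤ n ∧ ∀ j, k i j ≠ 0 → j ∈ s := by
    intro i
    obtain ⟨s, hscard, hsmem⟩ := hn i.1
    refine ⟨s.subtype (· ∈ L.carrier),
      le_trans (by rw [Finset.card_subtype]; exact Finset.card_filter_le _ _) hscard, ?_⟩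
    intro j hj
    rw [Finset.mem_subtype]
    refine hsmem j.1 j.2 ⟨(i.1 * (j.1)⁻¹)⁻¹, ?_, by group⟩
    simpa using hkK i j hj
  have hcol : ∀ j : ↥L.carrier, ∃ s : Finset ↥L.carrier,
      s.card ≤ m ∧ ∀ i, k i j ≠ 0 → i ∈ s := by
    intro j
    obtain ⟨s, hscard, hsmem⟩ := hm j.1
    refine ⟨s.subtype (· ∈ L.carrier),
      le_trans (by rw [Finset.card_subtype]; exact Finset.card_filter_le _ _) hscard, ?_⟩
    intro i hi
    rw [Finset.mem_subtype]
    exact hsmem i.1 i.2 ⟨i.1 * (j.1)⁻¹, hkK i j hi, by group⟩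
  constructor
  · intro g' hg' φ
    obtain ⟨s, _, hsmem⟩ := hrow ⟨g', hg'⟩
    refine Set.Finite.subset s.finite_toSet fun g hg => ?_
    have hk0 : k ⟨g', hg'⟩ g ≠ 0 := fun h0 => hg (mul_eq_zero_of_left h0 _)
    exact hsmem g hk0
  · obtain ⟨T, hT⟩ := schur_clm k M hM0 n m hbd hrow hcol
    exact ⟨T, hT⟩
end

section
/- Let G be a locally compact, second countable, Hausdorff topological group, let L₀ ∈ 𝒞(G) be uniformly separated, and let L ∈ Ξ_{L₀}. Let 𝒢_{L₀} := {(g, L') ∈ G × 𝒞(G) : L' ∈ Ξ_{L₀} and g ∈ L'} with the subspace topology from G × 𝒞(G), and for continuous compactly supported f : 𝒢_{L₀} → ℂ let π_L(f) be the bounded operator on ℓ²(L) given by (π_L(f)φ)(g') := Σ_{g ∈ L} f(g'g⁻¹, g·L) φ(g). For continuous compactly supported f₁, f₂ : 𝒢_{L₀} → ℂ, define their convolution by (f₁ ∗ f₂)(g, L') := Σ_{g' ∈ L'} f₁(g g'⁻¹, g'·L') f₂(g', L') for (g, L') ∈ 𝒢_{L₀} (a finite sum), and the involution by f*(g, L')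 := conj(f(g⁻¹, g·L')). Then π_L(f₁ ∗ f₂) = π_L(f₁) ∘ π_L(f₂), and π_L(f*) equals the Hilbert-space adjoint of π_L(f) on ℓ²(L). -/
open Set Topology Filter

variable {G : Type*} [Group G] [TopologicalSpace G] [IsTopologicalGroup G]

/-- The convolution product `(f₁ ∗ f₂)(g, L') = Σ_{g' ∈ L'} f₁(g g'⁻¹, g'·L') f₂(g', L')` on
functions on the groupoid `𝒢_{L₀}`.  The hypothesis `hmem` records the (true) invariance fact
`g'·L' ∈ Ξ_{L₀}` needed to write down the arguments of `f₁`. -/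
noncomputable def groupoidConv (L₀ : ClosedSubsets G)
    (hmem : ∀ L' ∈ transversal L₀, ∀ g ∈ L'.carrier,
      ClosedSubsets.smul g L' ∈ transversal L₀)
    (f₁ f₂ : PatternGroupoid L₀ → ℂ) : PatternGroupoid L₀ → ℂ := fun p =>
  ∑' g' : ↥p.1.2.carrier,
    f₁ ⟨(p.1.1 * (g'.1)⁻¹, ClosedSubsets.smul g'.1 p.1.2),
        hmem p.1.2 p.2.1 g'.1 g'.2, ⟨p.1.1, p.2.2, rfl⟩⟩ *
    f₂ ⟨(g'.1, p.1.2), p.2.1, g'.2⟩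

/-- The involution `f*(g, L') = conj (f(g⁻¹, g·L'))` on functions on the groupoid `𝒢_{L₀}`. -/
def groupoidInvol (L₀ : ClosedSubsets G)
    (hmem : ∀ L' ∈ transversal L₀, ∀ g ∈ L'.carrier,
      ClosedSubsets.smul g L' ∈ transversal L₀)
    (f : PatternGroupoid L₀ → ℂ) : PatternGroupoid L₀ → ℂ := fun p =>
  starRingEnd ℂ
    (f ⟨((p.1.1)⁻¹, ClosedSubsets.smul p.1.1 p.1.2),
      hmem p.1.2 p.2.1 p.1.1 p.2.2, ⟨1, p.2.1.2, one_mul _⟩⟩)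


section FellAux
set_option linter.unusedSectionVars false
variable {X : Type*} [TopologicalSpace X]


lemma ClosedSubsets.ext'_s16 {C D : ClosedSubsets X} (h : C.carrier = D.carrier) : C = D := by
  cases C; cases D; simpa using h

lemma fell_isOpen {K : Set X} (hK : IsCompact K) {𝓕 : Set (Set X)} (h𝓕 : 𝓕.Finite)
    (hF : ∀ F ∈ 𝓕, IsOpen F ∧ F.Nonempty) :
    IsOpen {Y : ClosedSubsets X | Y.carrier ∩ K = ∅ ∧ ∀ F ∈ 𝓕, (Y.carrier ∩ F).Nonempty} :=
  TopologicalSpace.isOpen_generateFrom_of_mem ⟨K, 𝓕, hK, h𝓕, hF, rfl⟩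

lemma fell_isOpen_miss {K : Set X} (hK : IsCompact K) :
    IsOpen {Y : ClosedSubsets X | Y.carrier ∩ K = ∅} := by
  have := fell_isOpen (X := X) hK (𝓕 := ∅) finite_empty (by simp)
  simpa using this

lemma fell_isOpen_hit {V : Set X} (hV : IsOpen V) (hne : V.Nonempty) :
    IsOpen {Y : ClosedSubsets X | (Y.carrier ∩ V).Nonempty} := by
  have := fell_isOpen (X := X) isCompact_empty (𝓕 := {V}) (finite_singleton V)
    (by simpa using ⟨hV, hne⟩)
  simpa using this

lemma fell_miss_mem_nhds {C : ClosedSubsets X} {K : Set X} (hK : IsCompact K)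
    (h : C.carrier ∩ K = ∅) : ∀ᶠ D in 𝓝 C, D.carrier ∩ K = ∅ :=
  (fell_isOpen_miss hK).mem_nhds h

lemma fell_hit_mem_nhds {C : ClosedSubsets X} {V : Set X} (hV : IsOpen V)
    (h : (C.carrier ∩ V).Nonempty) : ∀ᶠ D in 𝓝 C, (D.carrier ∩ V).Nonempty :=
  (fell_isOpen_hit hV (h.mono inter_subset_right)).mem_nhds h

variable [T2Space X] [LocallyCompactSpace X]

lemma fell_sep {C D : ClosedSubsets X} {x : X}
    (hx : x ∈ C.carrier) (hx' : x ∉ D.carrier) :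
    ∃ u v : Set (ClosedSubsets X), IsOpen u ∧ IsOpen v ∧ C ∈ u ∧ D ∈ v ∧ Disjoint u v := by
  obtain ⟨K, hKc, hxK, hKD⟩ := exists_compact_subset D.isClosed'.isOpen_compl hx'
  refine ⟨{Y | (Y.carrier ∩ interior K).Nonempty}, {Y | Y.carrier ∩ K = ∅},
    fell_isOpen_hit isOpen_interior ⟨x, hxK⟩, fell_isOpen_miss hKc,
    ⟨x, hx, hxK⟩, ?_, ?_⟩
  · exact eq_empty_of_forall_notMem fun y hy => hKD hy.2 hy.1
  · rw [Set.disjoint_left]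
    rintro Y ⟨y, hyY, hyK⟩ hY2
    exact absurd (Set.eq_empty_iff_forall_notMem.mp hY2 y ⟨hyY, interior_subset hyK⟩) (by simp)

instance fellT2 : T2Space (ClosedSubsets X) := by
  constructor
  intro C D hne
  have hcar : C.carrier ≠ D.carrier := fun h => hne (ClosedSubsets.ext'_s16 h)
  have hsub : ¬(C.carrier ⊆ D.carrier) ∨ ¬(D.carrier ⊆ C.carrier) := by
    by_contra h; push_neg at h; exact hcar (le_antisymm h.1 h.2)
  rcases hsub with h | h
  · obtain ⟨x, hx, hx'⟩ := Set.not_subset.mp h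
    exact fell_sep hx hx'
  · obtain ⟨x, hx, hx'⟩ := Set.not_subset.mp h
    obtain ⟨u, v, hu, hv, hCu, hDv, hdisj⟩ := fell_sep hx hx'
    exact ⟨v, u, hv, hu, hDv, hCu, hdisj.symm⟩

lemma isClosed_mem_fell :
    IsClosed {p : X × ClosedSubsets X | p.1 ∈ p.2.carrier} := by
  rw [← isOpen_compl_iff, isOpen_iff_mem_nhds]
  rintro ⟨g, C⟩ (hg : ¬ g ∈ C.carrier)
  obtain ⟨K, hKc, hgK, hKC⟩ := exists_compact_subset C.isClosed'.isOpen_compl hg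
  rw [nhds_prod_eq]
  refine Filter.mem_of_superset
    (Filter.prod_mem_prod (isOpen_interior.mem_nhds hgK)
      (fell_miss_mem_nhds hKc (eq_empty_of_forall_notMem fun y hy => hKC hy.2 hy.1))) ?_
  rintro ⟨g', C'⟩ ⟨hg', hC'⟩ (hmem : g' ∈ C'.carrier)
  exact Set.eq_empty_iff_forall_notMem.mp hC' g' ⟨hmem, interior_subset hg'⟩

lemma isClosed_one_mem' {x : X} :
    IsClosed {C : ClosedSubsets X | x ∈ C.carrier} := by
  rw [← isOpen_compl_iff, isOpen_iff_mem_nhds]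
  intro C (hg : ¬ x ∈ C.carrier)
  obtain ⟨K, hKc, hgK, hKC⟩ := exists_compact_subset C.isClosed'.isOpen_compl hg
  refine Filter.mem_of_superset
    (fell_miss_mem_nhds hKc (eq_empty_of_forall_notMem fun y hy => hKC hy.2 hy.1)) ?_
  intro C' hC' (hmem : x ∈ C'.carrier)
  exact Set.eq_empty_iff_forall_notMem.mp hC' x ⟨hmem, interior_subset hgK⟩

end FellAux

section GroupAux
open scoped Pointwise

set_option linter.unusedSectionVars false

variable {G : Type*} [Group G] [TopologicalSpace G] [IsTopologicalGroup G]

lemma smul_carrier (g : G) (C : ClosedSubsets G) :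
    (ClosedSubsets.smul g C).carrier = (fun x => x * g⁻¹) '' C.carrier := rfl

lemma mem_smul_iff {x g : G} {C : ClosedSubsets G} :
    x ∈ (ClosedSubsets.smul g C).carrier ↔ x * g ∈ C.carrier := by
  constructor
  · rintro ⟨c, hc, rfl⟩; simpa using hc
  · intro h; exact ⟨x * g, h, by simp⟩

lemma smul_smul' (h g : G) (C : ClosedSubsets G) :
    ClosedSubsets.smul h (ClosedSubsets.smul g C) = ClosedSubsets.smul (h * g) C := by
  apply ClosedSubsets.ext'_s16
  simp only [smul_carrier, Set.image_image]
  apply Set.image_congr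
  intro x _
  simp [mul_inv_rev, mul_assoc]

lemma smul_one' (C : ClosedSubsets G) : ClosedSubsets.smul 1 C = C := by
  apply ClosedSubsets.ext'_s16
  simp [smul_carrier]

lemma smul_inter_empty_iff {g : G} {C : ClosedSubsets G} {K : Set G} :
    (ClosedSubsets.smul g C).carrier ∩ K = ∅ ↔
      C.carrier ∩ (fun x => x * g) '' K = ∅ := by
  simp only [Set.eq_empty_iff_forall_notMem, Set.mem_inter_iff, not_and, mem_smul_iff]
  constructor
  · rintro h y hyC hy
    obtain ⟨k, hk, rfl⟩ := hy
    exact h k (by simpa using hyC) hk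
  · intro h x hxg hxK
    exact h (x * g) hxg ⟨x, hxK, rfl⟩

/-- Continuity of the right action of `G` on its closed subsets (Fell topology). -/
lemma continuous_fellAction [LocallyCompactSpace G] [T2Space G] :
    Continuous (fun p : G × ClosedSubsets G => ClosedSubsets.smul p.1 p.2) := by
  rw [continuous_generateFrom_iff]
  rintro s ⟨K, 𝓕, hK, h𝓕, hF, rfl⟩
  rw [isOpen_iff_mem_nhds]
  rintro ⟨g₀, C₀⟩ ⟨hmiss, hhit⟩
  have Hmiss : ∀ᶠ p : G × ClosedSubsets G in 𝓝 (g₀, C₀),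
      (ClosedSubsets.smul p.1 p.2).carrier ∩ K = ∅ := by
    have hempty : C₀.carrier ∩ (fun x => x * g₀) '' K = ∅ := smul_inter_empty_iff.mp hmiss
    have hsub : K ×ˢ ({g₀} : Set G) ⊆ (fun q : G × G => q.1 * q.2) ⁻¹' C₀.carrierᶜ := by
      rintro ⟨k, g⟩ ⟨hk, hg⟩ hx
      simp only [Set.mem_singleton_iff] at hg hk hx
      rw [hg] at hx
      exact Set.eq_empty_iff_forall_notMem.mp hempty (k * g₀) ⟨hx, k, hk, rfl⟩
    obtain ⟨A, B, hA, hB, hKA, hgB, hAB⟩ := generalized_tube_lemma hK isCompact_singleton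
      (C₀.isClosed'.isOpen_compl.preimage continuous_mul) hsub
    obtain ⟨Q, hQc, hgQ, hQB⟩ := exists_compact_subset hB (hgB rfl)
    have hKQ : IsCompact (K * Q) := hK.mul hQc
    have hKQW : C₀.carrier ∩ (K * Q) = ∅ := by
      apply Set.eq_empty_of_forall_notMem
      rintro x ⟨hxC, hxKQ⟩
      obtain ⟨k, hk, q, hq, rfl⟩ := Set.mem_mul.mp hxKQ
      exact hAB (Set.mk_mem_prod (hKA hk) (hQB hq)) hxC
    rw [nhds_prod_eq]
    refine Filter.mem_of_superset
      (Filter.prod_mem_prod (isOpen_interior.mem_nhds hgQ) (fell_miss_mem_nhds hKQ hKQW)) ?_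
    rintro ⟨g, C⟩ ⟨hg, hC⟩
    refine smul_inter_empty_iff.mpr (Set.eq_empty_of_forall_notMem ?_)
    rintro x ⟨hxC, k, hk, rfl⟩
    exact Set.eq_empty_iff_forall_notMem.mp hC (k * g)
      ⟨hxC, Set.mul_mem_mul hk (interior_subset hg)⟩
  have Hhit : ∀ᶠ p : G × ClosedSubsets G in 𝓝 (g₀, C₀),
      ∀ F ∈ 𝓕, ((ClosedSubsets.smul p.1 p.2).carrier ∩ F).Nonempty := by
    rw [Filter.eventually_all_finite h𝓕]
    intro F hFmem
    obtain ⟨x, hxs, hxF⟩ := hhit F hFmem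
    have hc₀ : x * g₀ ∈ C₀.carrier := mem_smul_iff.mp hxs
    have hopen : IsOpen ((fun q : G × G => q.1 * q.2⁻¹) ⁻¹' F) :=
      (hF F hFmem).1.preimage (continuous_fst.mul continuous_snd.inv)
    have hmemq : (x * g₀, g₀) ∈ (fun q : G × G => q.1 * q.2⁻¹) ⁻¹' F := by
      simpa [mul_assoc] using hxF
    obtain ⟨A, B, hA, hB, hcA, hgB, hAB⟩ := isOpen_prod_iff.mp hopen _ _ hmemq
    rw [nhds_prod_eq]
    refine Filter.mem_of_superset
      (Filter.prod_mem_prod (hB.mem_nhds hgB)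
        (fell_hit_mem_nhds hA ⟨x * g₀, hc₀, hcA⟩)) ?_
    rintro ⟨g, C⟩ ⟨hg, c, hcC, hcA'⟩
    exact ⟨c * g⁻¹, mem_smul_iff.mpr (by simpa using hcC), hAB (Set.mk_mem_prod hcA' hg)⟩
  exact (Hmiss.and Hhit).mono fun p hp => hp

end GroupAux

section SmulEquiv
variable {G : Type*} [Group G] [TopologicalSpace G] [IsTopologicalGroup G]

/-- Reindexing bijection between `L` and its translate. -/
def smulEquiv (g : G) (C : ClosedSubsets G) : ↥C.carrier ≃ ↥(ClosedSubsets.smul g C).carrier where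
  toFun k := ⟨k.1 * g⁻¹, ⟨k.1, k.2, rfl⟩⟩
  invFun h := ⟨h.1 * g, mem_smul_iff.mp h.2⟩
  left_inv k := by apply Subtype.ext; simp
  right_inv h := by apply Subtype.ext; simp

end SmulEquiv

section SepAux

set_option linter.unusedSectionVars false
open scoped Pointwise

variable {G : Type*} [Group G] [TopologicalSpace G] [IsTopologicalGroup G]

lemma sSeparated_smul {U : Set G} {C : ClosedSubsets G} (h : SSeparated U C.carrier) (g : G) :
    SSeparated U (ClosedSubsets.smul g C).carrier := by
  intro a x hx y hy
  obtain ⟨hxC, u, huU, hux⟩ := hx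
  obtain ⟨hyC, v, hvU, hvy⟩ := hy
  have hx' : x * g ∈ C.carrier ∩ (fun z => z * (g⁻¹ * a)⁻¹) '' U :=
    ⟨mem_smul_iff.mp hxC, u, huU, by rw [← hux]; group⟩
  have hy' : y * g ∈ C.carrier ∩ (fun z => z * (g⁻¹ * a)⁻¹) '' U :=
    ⟨mem_smul_iff.mp hyC, v, hvU, by rw [← hvy]; group⟩
  have := h (g⁻¹ * a) hx' hy'
  exact mul_right_cancel this

lemma isClosed_sSeparated [T2Space G] {U : Set G} (hU : IsOpen U) :
    IsClosed {C : ClosedSubsets G | SSeparated U C.carrier} := by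
  rw [← isOpen_compl_iff, isOpen_iff_mem_nhds]
  intro C hC
  simp only [Set.mem_compl_iff, Set.mem_setOf_eq, SSeparated] at hC
  push_neg at hC
  obtain ⟨a, hsub⟩ := hC
  obtain ⟨x, hx, y, hy, hxy⟩ := hsub
  obtain ⟨Wx, Wy, hWx, hWy, hxW, hyW, hdisj⟩ := t2_separation hxy
  have hVopen : IsOpen ((fun z => z * a⁻¹) '' U) := (Homeomorph.mulRight a⁻¹).isOpenMap _ hU
  refine Filter.mem_of_superset
    ((fell_hit_mem_nhds (hWx.inter hVopen) ⟨x, hx.1, hxW, hx.2⟩).and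
     (fell_hit_mem_nhds (hWy.inter hVopen) ⟨y, hy.1, hyW, hy.2⟩)) ?_
  rintro D ⟨⟨x', hx'D, hx'W, hx'V⟩, ⟨y', hy'D, hy'W, hy'V⟩⟩
  intro hD
  have hx'y' : x' = y' := hD a ⟨hx'D, hx'V⟩ ⟨hy'D, hy'V⟩
  exact Set.disjoint_left.mp hdisj hx'W (hx'y' ▸ hy'W)

lemma hull_sSeparated [T2Space G] {U : Set G} (hU : IsOpen U) {L₀ : ClosedSubsets G}
    (h : SSeparated U L₀.carrier) {C : ClosedSubsets G} (hC : C ∈ hull L₀) :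
    SSeparated U C.carrier := by
  have hsub : hull L₀ ⊆ {C : ClosedSubsets G | SSeparated U C.carrier} :=
    closure_minimal (by rintro D ⟨g, rfl⟩; exact sSeparated_smul h g) (isClosed_sSeparated hU)
  exact hsub hC

lemma sSeparated_finite_inter {U L : Set G} (hU : IsOpen U) (hne : U.Nonempty)
    (h : SSeparated U L) {K : Set G} (hK : IsCompact K) : (L ∩ K).Finite := by
  obtain ⟨u₀, hu₀⟩ := hne
  have hcov : K ⊆ ⋃ x ∈ K, (fun z => z * (x⁻¹ * u₀)⁻¹) '' U := by
    intro x hx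
    exact Set.mem_biUnion hx ⟨u₀, hu₀, by group⟩
  obtain ⟨t, hts, htfin, hcov'⟩ := hK.elim_finite_subcover_image
    (fun x _ => (Homeomorph.mulRight _).isOpenMap _ hU) hcov
  refine Set.Finite.subset (htfin.biUnion (fun x _ => (h (x⁻¹ * u₀)).finite)) ?_
  rintro z ⟨hzL, hzK⟩
  obtain ⟨x, hxt, hz⟩ := Set.mem_iUnion₂.mp (hcov' hzK)
  exact Set.mem_biUnion hxt ⟨hzL, hz⟩

variable [LocallyCompactSpace G] [T2Space G]

lemma isClosed_transversal (L₀ : ClosedSubsets G) : IsClosed (transversal L₀) :=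
  IsClosed.inter isClosed_closure isClosed_one_mem'

lemma isClosed_groupoidSet (L₀ : ClosedSubsets G) :
    IsClosed {p : G × ClosedSubsets G | p.2 ∈ transversal L₀ ∧ p.1 ∈ p.2.carrier} :=
  IsClosed.inter ((isClosed_transversal L₀).preimage continuous_snd) isClosed_mem_fell

end SepAux

section GroupoidAux

set_option linter.unusedSectionVars false
set_option maxHeartbeats 1000000
open scoped Pointwise

variable {G : Type*} [Group G] [TopologicalSpace G] [IsTopologicalGroup G]
  [LocallyCompactSpace G] [T2Space G] (L₀ : ClosedSubsets G)

lemma range_groupoid_val :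
    Set.range (Subtype.val : PatternGroupoid L₀ → G × ClosedSubsets G) =
      {p : G × ClosedSubsets G | p.2 ∈ transversal L₀ ∧ p.1 ∈ p.2.carrier} :=
  Subtype.range_coe_subtype

lemma groupoid_isCompact_of_val {A : Set (PatternGroupoid L₀)}
    (hA : IsCompact (Subtype.val '' A)) : IsCompact A :=
  Topology.IsEmbedding.subtypeVal.isCompact_iff.mpr hA

lemma hasCompactSupport_of_subset {f : PatternGroupoid L₀ → ℂ}
    {K : Set G} (hK : IsCompact K) {C : Set (ClosedSubsets G)} (hC : IsCompact C)
    (hsub : ∀ p : PatternGroupoid L₀, f p ≠ 0 → p.1.1 ∈ K ∧ p.1.2 ∈ C) :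
    HasCompactSupport f := by
  have hclA : IsClosed (Subtype.val ⁻¹' (K ×ˢ C) : Set (PatternGroupoid L₀)) :=
    ((hK.isClosed.prod hC.isClosed)).preimage continuous_subtype_val
  have hcomp : IsCompact (Subtype.val ⁻¹' (K ×ˢ C) : Set (PatternGroupoid L₀)) := by
    apply groupoid_isCompact_of_val
    rw [Set.image_preimage_eq_range_inter, range_groupoid_val]
    exact (hK.prod hC).inter_left (isClosed_groupoidSet L₀)
  refine IsCompact.of_isClosed_subset hcomp (isClosed_tsupport f) ?_
  refine closure_minimal ?_ hclA
  intro p hp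
  obtain ⟨h1, h2⟩ := hsub p hp
  exact Set.mk_mem_prod h1 h2

variable (hmem : ∀ L' ∈ transversal L₀, ∀ g ∈ L'.carrier,
      ClosedSubsets.smul g L' ∈ transversal L₀)

/-- The inversion map of the groupoid. -/
def groupoidInv : PatternGroupoid L₀ → PatternGroupoid L₀ := fun p =>
  ⟨((p.1.1)⁻¹, ClosedSubsets.smul p.1.1 p.1.2),
    hmem p.1.2 p.2.1 p.1.1 p.2.2, ⟨1, p.2.1.2, one_mul _⟩⟩

lemma continuous_groupoidInv : Continuous (groupoidInv L₀ hmem) := by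
  apply Continuous.subtype_mk
  exact ((continuous_fst.comp continuous_subtype_val).inv).prodMk
    (continuous_fellAction.comp
      ((continuous_fst.comp continuous_subtype_val).prodMk
        (continuous_snd.comp continuous_subtype_val)))

lemma groupoidInv_involutive : Function.Involutive (groupoidInv L₀ hmem) := by
  intro p
  apply Subtype.ext
  apply Prod.ext
  · simp [groupoidInv]
  · show ClosedSubsets.smul (p.1.1)⁻¹ (ClosedSubsets.smul p.1.1 p.1.2) = p.1.2
    rw [smul_smul', inv_mul_cancel, smul_one']

/-- The inversion map of the groupoid as a homeomorphism. -/
def groupoidInvHomeo : PatternGroupoid L₀ ≃ₜ PatternGroupoid L₀ where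
  toFun := groupoidInv L₀ hmem
  invFun := groupoidInv L₀ hmem
  left_inv := groupoidInv_involutive L₀ hmem
  right_inv := groupoidInv_involutive L₀ hmem
  continuous_toFun := continuous_groupoidInv L₀ hmem
  continuous_invFun := continuous_groupoidInv L₀ hmem

lemma groupoidInvol_eq (f : PatternGroupoid L₀ → ℂ) :
    groupoidInvol L₀ hmem f = (starRingEnd ℂ) ∘ f ∘ groupoidInv L₀ hmem := rfl

lemma groupoidInvol_continuous {f : PatternGroupoid L₀ → ℂ} (hfc : Continuous f) :
    Continuous (groupoidInvol L₀ hmem f) := by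
  rw [groupoidInvol_eq]
  exact Complex.continuous_conj.comp (hfc.comp (continuous_groupoidInv L₀ hmem))

lemma groupoidInvol_hasCompactSupport {f : PatternGroupoid L₀ → ℂ}
    (hfs : HasCompactSupport f) : HasCompactSupport (groupoidInvol L₀ hmem f) := by
  rw [groupoidInvol_eq]
  have h1 : HasCompactSupport (f ∘ groupoidInvHomeo L₀ hmem) :=
    hfs.comp_homeomorph (groupoidInvHomeo L₀ hmem)
  exact h1.comp_left (map_zero _)

lemma groupoidConv_hasCompactSupport (f₁ f₂ : PatternGroupoid L₀ → ℂ)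
    (h₁s : HasCompactSupport f₁) (h₂s : HasCompactSupport f₂) :
    HasCompactSupport (groupoidConv L₀ hmem f₁ f₂) := by
  have hK₁ : IsCompact ((fun p : PatternGroupoid L₀ => p.1.1) '' tsupport f₁) :=
    h₁s.image (continuous_fst.comp continuous_subtype_val)
  have hK₂ : IsCompact ((fun p : PatternGroupoid L₀ => p.1.1) '' tsupport f₂) :=
    h₂s.image (continuous_fst.comp continuous_subtype_val)
  have hC₂ : IsCompact ((fun p : PatternGroupoid L₀ => p.1.2) '' tsupport f₂) :=
    h₂s.image (continuous_snd.comp continuous_subtype_val)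
  apply hasCompactSupport_of_subset L₀ (hK₁.mul hK₂) hC₂
  intro p hp
  have hterm : ∃ g' : ↥p.1.2.carrier,
      f₁ ⟨(p.1.1 * (g'.1)⁻¹, ClosedSubsets.smul g'.1 p.1.2),
        hmem p.1.2 p.2.1 g'.1 g'.2, ⟨p.1.1, p.2.2, rfl⟩⟩ *
      f₂ ⟨(g'.1, p.1.2), p.2.1, g'.2⟩ ≠ 0 := by
    by_contra h
    push_neg at h
    exact hp (by rw [groupoidConv, tsum_congr h, tsum_zero])
  obtain ⟨g', hg'⟩ := hterm
  have hf₁ := left_ne_zero_of_mul hg'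
  have hf₂ := right_ne_zero_of_mul hg'
  have hmem₂ : (⟨(g'.1, p.1.2), p.2.1, g'.2⟩ : PatternGroupoid L₀) ∈ tsupport f₂ :=
    subset_closure hf₂
  have hmem₁ : (⟨(p.1.1 * (g'.1)⁻¹, ClosedSubsets.smul g'.1 p.1.2),
        hmem p.1.2 p.2.1 g'.1 g'.2, ⟨p.1.1, p.2.2, rfl⟩⟩ : PatternGroupoid L₀) ∈ tsupport f₁ :=
    subset_closure hf₁
  constructor
  · have : p.1.1 = (p.1.1 * (g'.1)⁻¹) * g'.1 := by group
    rw [this]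
    exact Set.mul_mem_mul ⟨_, hmem₁, rfl⟩ ⟨_, hmem₂, rfl⟩
  · exact ⟨_, hmem₂, rfl⟩

end GroupoidAux

section ConvCont

set_option linter.unusedSectionVars false
set_option maxHeartbeats 4000000

open scoped Pointwise

variable {G : Type*} [Group G] [TopologicalSpace G] [IsTopologicalGroup G]
  [LocallyCompactSpace G] [T2Space G] (L₀ : ClosedSubsets G)

lemma groupoidConv_continuous
    (hmem : ∀ L' ∈ transversal L₀, ∀ g ∈ L'.carrier,
      ClosedSubsets.smul g L' ∈ transversal L₀)
    {U : Set G} (hU : IsOpen U) (hUne : U.Nonempty)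
    (hsep : SSeparated U L₀.carrier)
    (f₁ f₂ : PatternGroupoid L₀ → ℂ) (h₁c : Continuous f₁) (h₂c : Continuous f₂)
    (h₂s : HasCompactSupport f₂) :
    Continuous (groupoidConv L₀ hmem f₁ f₂) := by
  classical
  obtain ⟨u₀, hu₀U⟩ := hUne
  have hsepL : ∀ L' ∈ transversal L₀, SSeparated U L'.carrier := fun L' h =>
    hull_sSeparated hU hsep h.1
  set K₂ : Set G := (fun p : PatternGroupoid L₀ => p.1.1) '' tsupport f₂ with hK₂def
  have hK₂c : IsCompact K₂ := h₂s.image (continuous_fst.comp continuous_subtype_val)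
  have hsupp₂ : ∀ (p : PatternGroupoid L₀), f₂ p ≠ 0 → p.1.1 ∈ K₂ :=
    fun p hp => ⟨p, subset_closure hp, rfl⟩
  set T : G → Set G := fun x => (fun z => z * (x⁻¹ * u₀)⁻¹) '' U with hTdef
  have hTopen : ∀ x, IsOpen (T x) := fun x => (Homeomorph.mulRight _).isOpenMap _ hU
  have hTmem : ∀ x, x ∈ T x := fun x => ⟨u₀, hu₀U, by group⟩
  have hTsub : ∀ (L' : ClosedSubsets G), L' ∈ transversal L₀ → ∀ x,
      (L'.carrier ∩ T x).Subsingleton := fun L' hL' x => hsepL L' hL' (x⁻¹ * u₀)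
  rw [continuous_iff_continuousAt]
  intro p₀
  have hL'₀mem : p₀.1.2 ∈ transversal L₀ := p₀.2.1
  set F₀ : Set G := p₀.1.2.carrier ∩ K₂ with hF₀def
  have hfin : F₀.Finite := sSeparated_finite_inter hU ⟨u₀, hu₀U⟩ (hsepL p₀.1.2 hL'₀mem) hK₂c
  have hsep2 : ∀ x y : G, ∃ AB : Set G × Set G, x ≠ y →
      IsOpen AB.1 ∧ IsOpen AB.2 ∧ x ∈ AB.1 ∧ y ∈ AB.2 ∧ Disjoint AB.1 AB.2 := by
    intro x y
    by_cases h : x = y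
    · exact ⟨(∅, ∅), fun hne => absurd h hne⟩
    · obtain ⟨A, B, hA, hB, hxA, hyB, hAB⟩ := t2_separation h
      exact ⟨(A, B), fun _ => ⟨hA, hB, hxA, hyB, hAB⟩⟩
  choose AB hAB using hsep2
  set V : G → Set G := fun x => T x ∩ ⋂ y ∈ F₀ \ {x}, ((AB x y).1 ∩ (AB y x).2) with hVdef
  have hVopen : ∀ x, IsOpen (V x) := by
    intro x
    refine (hTopen x).inter (hfin.diff.isOpen_biInter ?_)
    intro y hy
    have hyx : y ≠ x := by simpa using hy.2
    exact ((hAB x y hyx.symm).1).inter ((hAB y x hyx).2.1)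
  have hVmem : ∀ x, x ∈ V x := by
    intro x
    refine ⟨hTmem x, ?_⟩
    refine Set.mem_iInter₂.mpr ?_
    intro y hy
    have hyx : y ≠ x := by simpa using hy.2
    exact ⟨(hAB x y hyx.symm).2.2.1, (hAB y x hyx).2.2.2.1⟩
  have hVdisj : ∀ x ∈ F₀, ∀ y ∈ F₀, x ≠ y → Disjoint (V x) (V y) := by
    intro x hx y hy hxy
    have h1 : V x ⊆ (AB x y).1 := fun z hz =>
      (Set.mem_iInter₂.mp hz.2 y ⟨hy, by simpa using hxy.symm⟩).1
    have h2 : V y ⊆ (AB x y).2 := fun z hz =>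
      (Set.mem_iInter₂.mp hz.2 x ⟨hx, by simpa using hxy⟩).2
    exact ((hAB x y hxy).2.2.2.2).mono h1 h2
  have hVT : ∀ x, V x ⊆ T x := fun x => Set.inter_subset_left
  set K₀ : Set G := K₂ \ ⋃ x ∈ F₀, V x with hK₀def
  have hK₀c : IsCompact K₀ := hK₂c.diff (isOpen_biUnion fun x _ => hVopen x)
  have hmiss₀ : p₀.1.2.carrier ∩ K₀ = ∅ := by
    apply Set.eq_empty_of_forall_notMem
    rintro z ⟨hzL, hzK₂, hzV⟩
    exact hzV (Set.mem_biUnion (⟨hzL, hzK₂⟩ : z ∈ F₀) (hVmem z))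
  have hL'cont : Continuous (fun p : PatternGroupoid L₀ => p.1.2) :=
    continuous_snd.comp continuous_subtype_val
  have Hmiss : ∀ᶠ p : PatternGroupoid L₀ in 𝓝 p₀, p.1.2.carrier ∩ K₀ = ∅ :=
    (hL'cont.tendsto p₀).eventually (fell_miss_mem_nhds hK₀c hmiss₀)
  have Hhits : ∀ᶠ p : PatternGroupoid L₀ in 𝓝 p₀, ∀ x ∈ F₀, (p.1.2.carrier ∩ V x).Nonempty := by
    rw [Filter.eventually_all_finite hfin]
    intro x hx
    exact (hL'cont.tendsto p₀).eventually (fell_hit_mem_nhds (hVopen x) ⟨x, hx.1, hVmem x⟩)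
  set u : G → PatternGroupoid L₀ → G := fun x p =>
    if h : (p.1.2.carrier ∩ V x).Nonempty then h.choose else 1 with hudef
  have hu_spec : ∀ x (p : PatternGroupoid L₀), (p.1.2.carrier ∩ V x).Nonempty →
      u x p ∈ p.1.2.carrier ∩ V x := by
    intro x p h
    rw [hudef]
    simp only [dif_pos h]
    exact h.choose_spec
  have hu₀x : ∀ x ∈ F₀, u x p₀ = x := by
    intro x hx
    have hne : (p₀.1.2.carrier ∩ V x).Nonempty := ⟨x, hx.1, hVmem x⟩
    have h1 := hu_spec x p₀ hne
    exact hTsub p₀.1.2 hL'₀mem x ⟨h1.1, hVT x h1.2⟩ ⟨hx.1, hVT x (hVmem x)⟩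
  have hutend : ∀ x ∈ F₀, Filter.Tendsto (fun p => u x p) (𝓝 p₀) (𝓝 x) := by
    intro x hx
    rw [tendsto_nhds]
    intro W hWopen hxW
    have hev : ∀ᶠ p : PatternGroupoid L₀ in 𝓝 p₀, (p.1.2.carrier ∩ (V x ∩ W)).Nonempty :=
      (hL'cont.tendsto p₀).eventually
        (fell_hit_mem_nhds ((hVopen x).inter hWopen) ⟨x, hx.1, hVmem x, hxW⟩)
    filter_upwards [hev] with p hp
    obtain ⟨y, hyL, hyV, hyW⟩ := hp
    have hne : (p.1.2.carrier ∩ V x).Nonempty := ⟨y, hyL, hyV⟩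
    have hu := hu_spec x p hne
    have heq : u x p = y := hTsub p.1.2 p.2.1 x ⟨hu.1, hVT x hu.2⟩ ⟨hyL, hVT x hyV⟩
    have : u x p ∈ W := by rw [heq]; exact hyW
    exact this
  set q : G → PatternGroupoid L₀ → ℂ := fun x p =>
    if h : u x p ∈ p.1.2.carrier then
      f₁ ⟨(p.1.1 * (u x p)⁻¹, ClosedSubsets.smul (u x p) p.1.2),
          hmem p.1.2 p.2.1 (u x p) h, ⟨p.1.1, p.2.2, rfl⟩⟩ *
      f₂ ⟨(u x p, p.1.2), p.2.1, h⟩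
    else 0 with hqdef
  have Ha : ∀ᶠ p : PatternGroupoid L₀ in 𝓝 p₀,
      groupoidConv L₀ hmem f₁ f₂ p = ∑ x ∈ hfin.toFinset, q x p := by
    filter_upwards [Hmiss, Hhits] with p hpmiss hphits
    have hmemL : ∀ x ∈ hfin.toFinset, u x p ∈ p.1.2.carrier :=
      fun x hx => (hu_spec x p (hphits x (hfin.mem_toFinset.mp hx))).1
    set s : Finset ↥p.1.2.carrier :=
      hfin.toFinset.attach.image (fun x => ⟨u x.1 p, hmemL x.1 x.2⟩) with hsdef
    rw [groupoidConv, tsum_eq_sum (s := s) ?_]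
    · rw [hsdef]
      rw [Finset.sum_image ?inj]
      case inj =>
        intro a _ b _ hab
        have hval : u a.1 p = u b.1 p := congrArg Subtype.val hab
        by_contra hne
        have hne' : a.1 ≠ b.1 := fun h => hne (Subtype.ext h)
        have ha' : a.1 ∈ F₀ := hfin.mem_toFinset.mp a.2
        have hb' : b.1 ∈ F₀ := hfin.mem_toFinset.mp b.2
        have h1 : u a.1 p ∈ V a.1 := (hu_spec a.1 p (hphits a.1 ha')).2
        have h2 : u b.1 p ∈ V b.1 := (hu_spec b.1 p (hphits b.1 hb')).2
        exact Set.disjoint_left.mp (hVdisj a.1 ha' b.1 hb' hne') h1 (hval ▸ h2)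
      · rw [← Finset.sum_attach hfin.toFinset (fun x => q x p)]
        apply Finset.sum_congr rfl
        intro a _
        rw [hqdef]
        simp only [dif_pos (hmemL a.1 a.2)]
    · intro b hb
      by_contra hbne
      have hf₂ne : f₂ ⟨(b.1, p.1.2), p.2.1, b.2⟩ ≠ 0 := right_ne_zero_of_mul hbne
      have hbK₂ : b.1 ∈ K₂ := hsupp₂ _ hf₂ne
      have hbU : b.1 ∈ ⋃ x ∈ F₀, V x := by
        by_contra hnot
        exact Set.eq_empty_iff_forall_notMem.mp hpmiss b.1 ⟨b.2, hbK₂, hnot⟩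
      obtain ⟨x, hxF, hbV⟩ := Set.mem_iUnion₂.mp hbU
      have hne : (p.1.2.carrier ∩ V x).Nonempty := ⟨b.1, b.2, hbV⟩
      have hu := hu_spec x p hne
      have heq : b.1 = u x p :=
        hTsub p.1.2 p.2.1 x ⟨b.2, hVT x hbV⟩ ⟨hu.1, hVT x hu.2⟩
      apply hb
      rw [hsdef]
      refine Finset.mem_image.mpr ⟨⟨x, hfin.mem_toFinset.mpr hxF⟩, Finset.mem_attach _ _, ?_⟩
      exact Subtype.ext heq.symm
  have Hb : ∀ x ∈ F₀, Filter.Tendsto (fun p => q x p) (𝓝 p₀) (𝓝 (q x p₀)) := by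
    intro x hx
    have hxL : x ∈ p₀.1.2.carrier := hx.1
    set t₂ : PatternGroupoid L₀ := ⟨(x, p₀.1.2), hL'₀mem, hxL⟩ with ht₂def
    set t₁ : PatternGroupoid L₀ := ⟨(p₀.1.1 * x⁻¹, ClosedSubsets.smul x p₀.1.2),
      hmem p₀.1.2 hL'₀mem x hxL, ⟨p₀.1.1, p₀.2.2, rfl⟩⟩ with ht₁def
    set r₂ : PatternGroupoid L₀ → PatternGroupoid L₀ := fun p =>
      if h : u x p ∈ p.1.2.carrier then ⟨(u x p, p.1.2), p.2.1, h⟩ else t₂ with hr₂def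
    set r₁ : PatternGroupoid L₀ → PatternGroupoid L₀ := fun p =>
      if h : u x p ∈ p.1.2.carrier then
        ⟨(p.1.1 * (u x p)⁻¹, ClosedSubsets.smul (u x p) p.1.2),
          hmem p.1.2 p.2.1 (u x p) h, ⟨p.1.1, p.2.2, rfl⟩⟩
      else t₁ with hr₁def
    have hevmem : ∀ᶠ p : PatternGroupoid L₀ in 𝓝 p₀, u x p ∈ p.1.2.carrier := by
      filter_upwards [Hhits] with p hp
      exact (hu_spec x p (hp x hx)).1
    have hr₂tend : Filter.Tendsto r₂ (𝓝 p₀) (𝓝 t₂) := by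
      rw [tendsto_subtype_rng]
      refine Filter.Tendsto.congr' ?_
        ((hutend x hx).prodMk_nhds (hL'cont.tendsto p₀))
      filter_upwards [hevmem] with p hp
      rw [hr₂def]
      simp only [dif_pos hp]
    have hr₁tend : Filter.Tendsto r₁ (𝓝 p₀) (𝓝 t₁) := by
      rw [tendsto_subtype_rng]
      have hfst : Filter.Tendsto (fun p : PatternGroupoid L₀ => p.1.1 * (u x p)⁻¹)
          (𝓝 p₀) (𝓝 (p₀.1.1 * x⁻¹)) :=
        (((continuous_fst.comp continuous_subtype_val).tendsto p₀).mul (hutend x hx).inv)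
      have hsnd : Filter.Tendsto (fun p : PatternGroupoid L₀ =>
          ClosedSubsets.smul (u x p) p.1.2) (𝓝 p₀) (𝓝 (ClosedSubsets.smul x p₀.1.2)) :=
        (continuous_fellAction.tendsto (x, p₀.1.2)).comp
          ((hutend x hx).prodMk_nhds (hL'cont.tendsto p₀))
      refine Filter.Tendsto.congr' ?_ (hfst.prodMk_nhds hsnd)
      filter_upwards [hevmem] with p hp
      rw [hr₁def]
      simp only [dif_pos hp]
    have hq₀ : q x p₀ = f₁ t₁ * f₂ t₂ := by
      have hc : u x p₀ ∈ p₀.1.2.carrier := by rw [hu₀x x hx]; exact hxL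
      rw [hqdef]
      simp only [dif_pos hc]
      congr 1
      · congr 1
        apply Subtype.ext
        rw [ht₁def]
        simp only []
        rw [hu₀x x hx]
      · congr 1
        apply Subtype.ext
        rw [ht₂def]
        simp only []
        rw [hu₀x x hx]
    rw [hq₀]
    refine Filter.Tendsto.congr' ?_
      (((h₁c.tendsto t₁).comp hr₁tend).mul ((h₂c.tendsto t₂).comp hr₂tend))
    filter_upwards [hevmem] with p hp
    rw [hqdef, hr₁def, hr₂def]
    simp only [dif_pos hp, Function.comp]
  have Hsum : Filter.Tendsto (fun p => ∑ x ∈ hfin.toFinset, q x p) (𝓝 p₀)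
      (𝓝 (∑ x ∈ hfin.toFinset, q x p₀)) :=
    tendsto_finset_sum _ (fun x hx => Hb x (hfin.mem_toFinset.mp hx))
  have hp₀eq : groupoidConv L₀ hmem f₁ f₂ p₀ = ∑ x ∈ hfin.toFinset, q x p₀ :=
    Ha.self_of_nhds
  unfold ContinuousAt
  rw [hp₀eq]
  exact Filter.Tendsto.congr' (Filter.EventuallyEq.symm Ha) Hsum

end ConvCont

section MainAux

set_option linter.unusedSectionVars false
open scoped Pointwise

variable {G : Type*} [Group G] [TopologicalSpace G] [IsTopologicalGroup G]

lemma finite_val_mem {L : ClosedSubsets G} {U : Set G} (hU : IsOpen U) (hUne : U.Nonempty)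
    (hsep : SSeparated U L.carrier) {K : Set G} (hK : IsCompact K) :
    {g : ↥L.carrier | g.1 ∈ K}.Finite := by
  have h1 : (L.carrier ∩ K).Finite := sSeparated_finite_inter hU hUne hsep hK
  have h2 : (Subtype.val ⁻¹' (L.carrier ∩ K) : Set ↥L.carrier).Finite :=
    h1.preimage (Subtype.val_injective.injOn)
  exact h2.subset fun g hg => ⟨g.2, hg⟩

/-- An operator identity on singles implies the adjoint identity. -/
lemma adjoint_of_key {ι : Type*} [DecidableEq ι]
    (A B : lp (fun _ : ι => ℂ) 2 →L[ℂ] lp (fun _ : ι => ℂ) 2)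
    (key : ∀ (a b : ι) (xa xb : ℂ),
      @inner ℂ _ _ (A (lp.single 2 a xa)) (lp.single 2 b xb)
        = @inner ℂ _ _ (lp.single 2 a xa) (B (lp.single 2 b xb))) :
    A = ContinuousLinearMap.adjoint B := by
  rw [ContinuousLinearMap.eq_adjoint_iff]
  intro φ ψ
  have hφ : HasSum (fun a => lp.single 2 a (φ a)) φ := lp.hasSum_single (by norm_num) φ
  have hψ : HasSum (fun b => lp.single 2 b (ψ b)) ψ := lp.hasSum_single (by norm_num) ψ
  have step1 : ∀ (b : ι) (xb : ℂ),
      @inner ℂ _ _ (A φ) (lp.single 2 b xb) = @inner ℂ _ _ φ (B (lp.single 2 b xb)) := by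
    intro b xb
    have c1 := ((innerSL ℂ (lp.single 2 b xb)).comp A).hasSum hφ
    simp only [ContinuousLinearMap.comp_apply, innerSL_apply_apply] at c1
    have c2 := (innerSL ℂ (B (lp.single 2 b xb))).hasSum hφ
    simp only [innerSL_apply_apply] at c2
    have heq : (fun a => @inner ℂ _ _ (lp.single 2 b xb) (A (lp.single 2 a (φ a))))
        = fun a => @inner ℂ _ _ (B (lp.single 2 b xb)) (lp.single 2 a (φ a)) := by
      funext a
      rw [← inner_conj_symm (lp.single 2 b xb) (A (lp.single 2 a (φ a)))]
      rw [← inner_conj_symm (B (lp.single 2 b xb)) (lp.single 2 a (φ a))]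
      exact congrArg (starRingEnd ℂ) (key a b (φ a) xb)
    rw [heq] at c1
    have hval := c1.unique c2
    rw [← inner_conj_symm (A φ) (lp.single 2 b xb),
      ← inner_conj_symm φ (B (lp.single 2 b xb))]
    exact congrArg (starRingEnd ℂ) hval
  have c3 := (innerSL ℂ (A φ)).hasSum hψ
  simp only [innerSL_apply_apply] at c3
  have c4 := ((innerSL ℂ φ).comp B).hasSum hψ
  simp only [ContinuousLinearMap.comp_apply, innerSL_apply_apply] at c4
  have heq2 : (fun b => @inner ℂ _ _ (A φ) (lp.single 2 b (ψ b)))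
      = fun b => @inner ℂ _ _ φ (B (lp.single 2 b (ψ b))) :=
    funext fun b => step1 b (ψ b)
  rw [heq2] at c3
  exact c3.unique c4

end MainAux

open scoped Pointwise
set_option maxHeartbeats 2000000

/-- The left regular representation `π_L` is multiplicative with respect to
the convolution product and sends the involution to the Hilbert-space adjoint: for continuous,
compactly supported `f₁, f₂, f : 𝒢_{L₀} → ℂ`, one has `π_L(f₁ ∗ f₂) = π_L(f₁) ∘ π_L(f₂)` and
`π_L(f*) = π_L(f)†` on `ℓ²(L)`.  (Here `π` is any assignment of bounded operators satisfying
the defining formula of the left regular representation on continuous compactly supported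
functions, and `hmem` records a true invariance fact needed to state the formulas.) -/
theorem leftRegularRep_mul_and_star (G : Type*) [Group G] [TopologicalSpace G]
    [IsTopologicalGroup G] [LocallyCompactSpace G] [SecondCountableTopology G] [T2Space G]
    (L₀ : ClosedSubsets G) (hsep : UniformlySeparated L₀.carrier)
    (L : ClosedSubsets G) (hL : L ∈ transversal L₀)
    (hmem : ∀ L' ∈ transversal L₀, ∀ g ∈ L'.carrier,
      ClosedSubsets.smul g L' ∈ transversal L₀)
    (π : (PatternGroupoid L₀ → ℂ) →
      (lp (fun _ : ↥L.carrier => ℂ) 2 →L[ℂ] lp (fun _ : ↥L.carrier => ℂ) 2))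
    (hπ : ∀ f : PatternGroupoid L₀ → ℂ, Continuous f → HasCompactSupport f →
      ∀ (φ : lp (fun _ : ↥L.carrier => ℂ) 2) (g' : ↥L.carrier),
        π f φ g' = ∑' g : ↥L.carrier,
          f ⟨(g'.1 * (g.1)⁻¹, ClosedSubsets.smul g.1 L), hmem L hL g.1 g.2, ⟨g'.1, g'.2, rfl⟩⟩
            * φ g)
    (f₁ f₂ f : PatternGroupoid L₀ → ℂ)
    (h₁c : Continuous f₁) (h₁s : HasCompactSupport f₁)
    (h₂c : Continuous f₂) (h₂s : HasCompactSupport f₂)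
    (hfc : Continuous f) (hfs : HasCompactSupport f) :
    π (groupoidConv L₀ hmem f₁ f₂) = (π f₁).comp (π f₂) ∧
    π (groupoidInvol L₀ hmem f) = ContinuousLinearMap.adjoint (π f) := by
  classical
  obtain ⟨U, hU, hUne, hsepU⟩ := hsep
  have hLsep : SSeparated U L.carrier := hull_sSeparated hU hsepU hL.1
  constructor
  · -- multiplicativity
    have hconvc := groupoidConv_continuous L₀ hmem hU hUne hsepU f₁ f₂ h₁c h₂c h₂s
    have hconvs := groupoidConv_hasCompactSupport L₀ hmem f₁ f₂ h₁s h₂s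
    apply ContinuousLinearMap.ext
    intro φ
    apply lp.ext
    funext g'
    set A : ↥L.carrier → ↥L.carrier → ℂ := fun g' k =>
      f₁ ⟨(g'.1 * (k.1)⁻¹, ClosedSubsets.smul k.1 L), hmem L hL k.1 k.2, ⟨g'.1, g'.2, rfl⟩⟩
      with hA
    set B : ↥L.carrier → ↥L.carrier → ℂ := fun k g =>
      f₂ ⟨(k.1 * (g.1)⁻¹, ClosedSubsets.smul g.1 L), hmem L hL g.1 g.2, ⟨k.1, k.2, rfl⟩⟩
      with hB
    have hconveq : ∀ g : ↥L.carrier,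
        groupoidConv L₀ hmem f₁ f₂
            ⟨(g'.1 * (g.1)⁻¹, ClosedSubsets.smul g.1 L), hmem L hL g.1 g.2, ⟨g'.1, g'.2, rfl⟩⟩
          = ∑' k : ↥L.carrier, A g' k * B k g := by
      intro g
      rw [groupoidConv]
      rw [← Equiv.tsum_eq (smulEquiv g.1 L)]
      apply tsum_congr
      intro k
      congr 1
      · refine congrArg f₁ (Subtype.ext ?_)
        refine Prod.ext ?_ ?_
        · show (g'.1 * (g.1)⁻¹) * (k.1 * (g.1)⁻¹)⁻¹ = g'.1 * (k.1)⁻¹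
          group
        · show ClosedSubsets.smul (k.1 * (g.1)⁻¹) (ClosedSubsets.smul g.1 L)
            = ClosedSubsets.smul k.1 L
          rw [smul_smul']
          congr 1
          group

    have h1 : π (groupoidConv L₀ hmem f₁ f₂) φ g'
        = ∑' g : ↥L.carrier, (∑' k : ↥L.carrier, A g' k * B k g) * φ g := by
      rw [hπ _ hconvc hconvs φ g']
      exact tsum_congr fun g => by rw [hconveq g]
    have h2 : ((π f₁).comp (π f₂)) φ g'
        = ∑' k : ↥L.carrier, A g' k * ∑' g : ↥L.carrier, B k g * φ g := by
      rw [ContinuousLinearMap.comp_apply, hπ f₁ h₁c h₁s _ g']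
      exact tsum_congr fun k => by rw [hπ f₂ h₂c h₂s φ k]
    rw [h1, h2]
    -- finite supports
    have hK₁c : IsCompact ((fun p : PatternGroupoid L₀ => p.1.1) '' tsupport f₁) :=
      h₁s.image (continuous_fst.comp continuous_subtype_val)
    have hK₂c : IsCompact ((fun p : PatternGroupoid L₀ => p.1.1) '' tsupport f₂) :=
      h₂s.image (continuous_fst.comp continuous_subtype_val)
    set K₁ := (fun p : PatternGroupoid L₀ => p.1.1) '' tsupport f₁ with hK₁
    set K₂ := (fun p : PatternGroupoid L₀ => p.1.1) '' tsupport f₂ with hK₂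
    have hK₁i : IsCompact (K₁⁻¹ * {g'.1}) := hK₁c.inv.mul isCompact_singleton
    have hKbig : IsCompact (K₂⁻¹ * (K₁⁻¹ * {g'.1})) := hK₂c.inv.mul hK₁i
    have hsfin : {k : ↥L.carrier | k.1 ∈ K₁⁻¹ * {g'.1}}.Finite :=
      finite_val_mem hU hUne hLsep hK₁i
    have htfin : {g : ↥L.carrier | g.1 ∈ K₂⁻¹ * (K₁⁻¹ * {g'.1})}.Finite :=
      finite_val_mem hU hUne hLsep hKbig
    set s : Finset ↥L.carrier := hsfin.toFinset with hs
    set t : Finset ↥L.carrier := htfin.toFinset with ht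
    have hAzero : ∀ k, k ∉ s → A g' k = 0 := by
      intro k hk
      by_contra hne
      apply hk
      rw [hs, Set.Finite.mem_toFinset]
      have hmem1 : g'.1 * (k.1)⁻¹ ∈ K₁ :=
        ⟨_, subset_closure (Function.mem_support.mpr hne), rfl⟩
      have : k.1 = (g'.1 * (k.1)⁻¹)⁻¹ * g'.1 := by group
      rw [Set.mem_setOf_eq, this]
      exact Set.mul_mem_mul (Set.inv_mem_inv.mpr hmem1) (Set.mem_singleton _)
    have hBzero : ∀ k, k ∈ s → ∀ g, g ∉ t → B k g = 0 := by
      intro k hk g hg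
      by_contra hne
      apply hg
      rw [ht, Set.Finite.mem_toFinset]
      have hmem2 : k.1 * (g.1)⁻¹ ∈ K₂ :=
        ⟨_, subset_closure (Function.mem_support.mpr hne), rfl⟩
      have hkmem : k.1 ∈ K₁⁻¹ * {g'.1} := by rw [hs, Set.Finite.mem_toFinset] at hk; exact hk
      have : g.1 = (k.1 * (g.1)⁻¹)⁻¹ * k.1 := by group
      rw [Set.mem_setOf_eq, this]
      exact Set.mul_mem_mul (Set.inv_mem_inv.mpr hmem2) hkmem
    have hinner : ∀ g : ↥L.carrier,
        (∑' k : ↥L.carrier, A g' k * B k g) = ∑ k ∈ s, A g' k * B k g := by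
      intro g
      apply tsum_eq_sum
      intro k hk
      rw [hAzero k hk, zero_mul]
    have hLHS : ∑' g : ↥L.carrier, (∑' k : ↥L.carrier, A g' k * B k g) * φ g
        = ∑ g ∈ t, ∑ k ∈ s, (A g' k * B k g) * φ g := by
      rw [tsum_eq_sum (s := t) ?_]
      · exact Finset.sum_congr rfl fun g _ => by rw [hinner g, Finset.sum_mul]
      · intro g hg
        rw [hinner g]
        rw [Finset.sum_eq_zero fun k hk => by rw [hBzero k hk g hg, mul_zero], zero_mul]
    have hRHS : ∑' k : ↥L.carrier, A g' k * ∑' g : ↥L.carrier, B k g * φ g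
        = ∑ k ∈ s, ∑ g ∈ t, A g' k * (B k g * φ g) := by
      rw [tsum_eq_sum (s := s) ?_]
      · refine Finset.sum_congr rfl fun k hk => ?_
        rw [tsum_eq_sum (s := t) fun g hg => by rw [hBzero k hk g hg, zero_mul], Finset.mul_sum]
      · intro k hk
        rw [hAzero k hk, zero_mul]
    rw [hLHS, hRHS, Finset.sum_comm]
    exact Finset.sum_congr rfl fun k _ => Finset.sum_congr rfl fun g _ => by ring
  · -- adjoint
    have hinvc := groupoidInvol_continuous L₀ hmem hfc
    have hinvs := groupoidInvol_hasCompactSupport L₀ hmem hfs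
    set D : ↥L.carrier → ↥L.carrier → ℂ := fun a b =>
      f ⟨(a.1 * (b.1)⁻¹, ClosedSubsets.smul b.1 L), hmem L hL b.1 b.2, ⟨a.1, a.2, rfl⟩⟩
      with hDdef
    have hD : ∀ a b : ↥L.carrier,
        groupoidInvol L₀ hmem f
            ⟨(b.1 * (a.1)⁻¹, ClosedSubsets.smul a.1 L), hmem L hL a.1 a.2, ⟨b.1, b.2, rfl⟩⟩
          = starRingEnd ℂ (D a b) := by
      intro a b
      rw [groupoidInvol, hDdef]
      congr 1
      refine congrArg f (Subtype.ext ?_)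
      refine Prod.ext ?_ ?_
      · show ((b.1 * (a.1)⁻¹))⁻¹ = a.1 * (b.1)⁻¹
        group
      · show ClosedSubsets.smul (b.1 * (a.1)⁻¹) (ClosedSubsets.smul a.1 L)
          = ClosedSubsets.smul b.1 L
        rw [smul_smul']
        congr 1
        group
    apply adjoint_of_key
    intro a b xa xb
    have h1 : (lp.single 2 a xa : lp (fun _ : ↥L.carrier => ℂ) 2) a = xa := by
      simp [lp.single_apply]
    have h2 : (lp.single 2 b xb : lp (fun _ : ↥L.carrier => ℂ) 2) b = xb := by
      simp [lp.single_apply]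
    have hc1 : (π (groupoidInvol L₀ hmem f) (lp.single 2 a xa)) b
        = starRingEnd ℂ (D a b) * xa := by
      rw [hπ _ hinvc hinvs (lp.single 2 a xa) b]
      rw [tsum_eq_single a (fun g hg => by
        simp only [lp.single_apply]
        rw [Pi.single_eq_of_ne hg, mul_zero])]
      rw [h1, hD a b]
    have hc2 : (π f (lp.single 2 b xb)) a = D a b * xb := by
      rw [hπ f hfc hfs (lp.single 2 b xb) a]
      rw [tsum_eq_single b (fun g hg => by
        simp only [lp.single_apply]
        rw [Pi.single_eq_of_ne hg, mul_zero])]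
      rw [h2]
    rw [lp.inner_single_right, lp.inner_single_left, hc1, hc2]
    rw [RCLike.inner_apply, RCLike.inner_apply]
    simp only [map_mul, Complex.conj_conj]
    ring
end
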